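/- arXiv:1807.02363 — 7 statements merged into one kernel-verified Lean document; each statement's English description precedes it below -/
import Mathlib

section
/- Let k ≥ 1 and n ≥ 0 be integers. With γ_{λ,n} := 2^{2−2λ} Γ(n+2λ)/(Γ(λ) Γ(n+λ+1)) and β_{λ,n,μ} := (1−λ)_μ (n+1)_μ/(μ! (n+λ+1)_μ), the following identities hold: (a) ((n+2k+1)/(4k)) γ_{k,n+1} = γ_{k+1,n}; (b) for every integer 1 ≤ μ ≤ k, ((n+2k+1)/(4k)) γ_{k,n+1} (β_{k,n+1,μ−1} + β_{k,n+1,μ}) − ((n+2)/(2k)) γ_{k,n+2} β_{k,n+2,μ−1} = γ_{k+1,n} β_{k+1,n,μ} (note that β_{k,n+1,k} = 0 automatically since the factor (1−k)_k vanishes). -/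
open Real

/-- Rising factorial `(x)_m = x (x+1) ⋯ (x+m-1)`. -/
noncomputable def risingFactorial (x : ℝ) (m : ℕ) : ℝ :=
  ∏ i ∈ Finset.range m, (x + i)

/-- `β_{λ,n,μ} = (1-λ)_μ (n+1)_μ / (μ! (n+λ+1)_μ)`. -/
noncomputable def betaCoef (lam : ℝ) (n : ℕ) (μ : ℕ) : ℝ :=
  risingFactorial (1 - lam) μ * risingFactorial ((n : ℝ) + 1) μ /
    ((μ.factorial : ℝ) * risingFactorial ((n : ℝ) + lam + 1) μ)

/-- `γ_{λ,n} = 2^(2-2λ) Γ(n+2λ) / (Γ(λ) Γ(n+λ+1))`. -/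
noncomputable def gammaCoef (lam : ℝ) (n : ℕ) : ℝ :=
  (2 : ℝ) ^ (2 - 2 * lam) * Real.Gamma ((n : ℝ) + 2 * lam) /
    (Real.Gamma lam * Real.Gamma ((n : ℝ) + lam + 1))

lemma rf_succ (x : ℝ) (m : ℕ) :
    risingFactorial x (m + 1) = risingFactorial x m * (x + m) := by
  simp [risingFactorial, Finset.prod_range_succ]

lemma rf_succ' (x : ℝ) (m : ℕ) :
    risingFactorial x (m + 1) = x * risingFactorial (x + 1) m := by
  rw [risingFactorial, Finset.prod_range_succ']
  simp only [risingFactorial, Nat.cast_zero, add_zero, Nat.cast_succ]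
  rw [mul_comm]
  congr 1
  apply Finset.prod_congr rfl
  intro i _
  ring

lemma rf_pos (x : ℝ) (hx : 0 < x) (m : ℕ) : 0 < risingFactorial x m := by
  apply Finset.prod_pos
  intro i _
  positivity

lemma rf_ne (k m : ℕ) (h : m < k) : risingFactorial (1 - (k:ℝ)) m ≠ 0 := by
  apply Finset.prod_ne_zero_iff.mpr
  intro i hi
  have hi' : i + 1 < k := by
    have := Finset.mem_range.mp hi
    omega
  have h2 : (i:ℝ) + 1 < (k:ℝ) := by exact_mod_cast hi'
  intro hz
  nlinarith [hz]

/-- coefficient identities in the inductive step of the expansion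
of `(sin θ)^{2λ-1} C_n^λ(cos θ)` for integer `λ = k`:
(a) `((n+2k+1)/(4k)) γ_{k,n+1} = γ_{k+1,n}`;
(b) for `1 ≤ μ ≤ k`,
`((n+2k+1)/(4k)) γ_{k,n+1} (β_{k,n+1,μ-1} + β_{k,n+1,μ})
  - ((n+2)/(2k)) γ_{k,n+2} β_{k,n+2,μ-1} = γ_{k+1,n} β_{k+1,n,μ}`. -/
theorem gamma_beta_recurrence (k n : ℕ) (hk : 1 ≤ k) :
    (((n : ℝ) + 2 * k + 1) / (4 * k)) * gammaCoef (k : ℝ) (n + 1)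
      = gammaCoef ((k : ℝ) + 1) n
    ∧ ∀ μ : ℕ, 1 ≤ μ → μ ≤ k →
      (((n : ℝ) + 2 * k + 1) / (4 * k)) * gammaCoef (k : ℝ) (n + 1) *
          (betaCoef (k : ℝ) (n + 1) (μ - 1) + betaCoef (k : ℝ) (n + 1) μ)
        - (((n : ℝ) + 2) / (2 * k)) * gammaCoef (k : ℝ) (n + 2) *
            betaCoef (k : ℝ) (n + 2) (μ - 1)
      = gammaCoef ((k : ℝ) + 1) n * betaCoef ((k : ℝ) + 1) n μ := by
  have hK1 : (1:ℝ) ≤ (k:ℝ) := by exact_mod_cast hk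
  have hK0 : (0:ℝ) < (k:ℝ) := by linarith
  set K : ℝ := (k : ℝ) with hKdef
  set N : ℝ := (n : ℝ) with hNdef
  set Q : ℝ := (2:ℝ) ^ (2 - 2 * (K + 1)) with hQdef
  have hQpos : 0 < Q := Real.rpow_pos_of_pos (by norm_num) _
  have h4 : (2:ℝ) ^ ((2:ℕ):ℝ) = 4 := by rw [Real.rpow_natCast]; norm_num
  have hP : (2:ℝ) ^ (2 - 2 * K) = 4 * Q := by
    rw [hQdef, show (2 - 2*K : ℝ) = ((2:ℕ):ℝ) + (2 - 2*(K+1)) by push_cast; ring,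
      Real.rpow_add (by norm_num), h4]
  set G1 : ℝ := Real.Gamma (N + 2*K + 1) with hG1def
  set G2 : ℝ := Real.Gamma (N + K + 2) with hG2def
  set Gk : ℝ := Real.Gamma K with hGkdef
  have hG1pos : 0 < G1 := Real.Gamma_pos_of_pos (by positivity)
  have hG2pos : 0 < G2 := Real.Gamma_pos_of_pos (by positivity)
  have hGkpos : 0 < Gk := Real.Gamma_pos_of_pos hK0
  have e1 : Real.Gamma (N + 2*K + 2) = (N + 2*K + 1) * G1 := by
    rw [show (N + 2*K + 2 : ℝ) = (N + 2*K + 1) + 1 by ring,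
      Real.Gamma_add_one (by positivity)]
  have e2 : Real.Gamma (N + K + 3) = (N + K + 2) * G2 := by
    rw [show (N + K + 3 : ℝ) = (N + K + 2) + 1 by ring,
      Real.Gamma_add_one (by positivity)]
  have e3 : Real.Gamma (K + 1) = K * Gk := Real.Gamma_add_one (ne_of_gt hK0)
  have hg1 : gammaCoef K (n + 1) = 4 * Q * G1 / (Gk * G2) := by
    rw [gammaCoef, hP]
    push_cast
    rw [show (N + 1 + 2*K : ℝ) = N + 2*K + 1 by ring,
      show (N + 1 + K + 1 : ℝ) = N + K + 2 by ring]
  have hg2 : gammaCoef K (n + 2)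
      = 4 * Q * ((N + 2*K + 1) * G1) / (Gk * ((N + K + 2) * G2)) := by
    rw [gammaCoef, hP]
    push_cast
    rw [show (N + 2 + 2*K : ℝ) = N + 2*K + 2 by ring,
      show (N + 2 + K + 1 : ℝ) = N + K + 3 by ring, e1, e2]
  have hg3 : gammaCoef (K + 1) n = Q * ((N + 2*K + 1) * G1) / ((K * Gk) * G2) := by
    rw [gammaCoef, e3]
    rw [show (N + 2*(K+1) : ℝ) = N + 2*K + 2 by ring, e1,
      show (N + (K+1) + 1 : ℝ) = N + K + 2 by ring]
  constructor
  · rw [hg1, hg3]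
    field_simp
  · intro μ hμ1 hμk
    obtain ⟨m, rfl⟩ : ∃ m, μ = m + 1 := ⟨μ - 1, by omega⟩
    simp only [Nat.add_sub_cancel]
    have ha : risingFactorial (1 - K) m ≠ 0 := rf_ne k m (by omega)
    have hb : 0 < risingFactorial (N + 2) m := rf_pos _ (by positivity) m
    have hc : 0 < risingFactorial (N + K + 2) m := rf_pos _ (by positivity) m
    have hf : (0:ℝ) < (m.factorial : ℝ) := by exact_mod_cast m.factorial_pos
    have hM0 : (0:ℝ) ≤ (m:ℝ) := Nat.cast_nonneg m
    have hb1 : betaCoef K (n + 1) m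
        = risingFactorial (1 - K) m * risingFactorial (N + 2) m /
          ((m.factorial : ℝ) * risingFactorial (N + K + 2) m) := by
      rw [betaCoef]
      push_cast
      rw [show (N + 1 + 1 : ℝ) = N + 2 by ring,
        show (N + 1 + K + 1 : ℝ) = N + K + 2 by ring]
    have hb2 : betaCoef K (n + 1) (m + 1)
        = (risingFactorial (1 - K) m * (1 - K + m)) *
            (risingFactorial (N + 2) m * (N + 2 + m)) /
          ((((m:ℝ) + 1) * (m.factorial : ℝ)) *
            (risingFactorial (N + K + 2) m * (N + K + 2 + m))) := by
      rw [betaCoef, rf_succ, rf_succ, rf_succ, Nat.factorial_succ]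
      push_cast
      rw [show (N + 1 + 1 : ℝ) = N + 2 by ring,
        show (N + 1 + K + 1 : ℝ) = N + K + 2 by ring]
    have hrfb : risingFactorial (N + 3) m
        = risingFactorial (N + 2) m * (N + 2 + m) / (N + 2) := by
      have h := rf_succ' (N + 2) m
      rw [rf_succ, show (N + 2 + 1 : ℝ) = N + 3 by ring] at h
      rw [eq_div_iff (by positivity : (N+2:ℝ) ≠ 0)]
      linarith [h]
    have hrfc : risingFactorial (N + K + 3) m
        = risingFactorial (N + K + 2) m * (N + K + 2 + m) / (N + K + 2) := by
      have h := rf_succ' (N + K + 2) m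
      rw [rf_succ, show (N + K + 2 + 1 : ℝ) = N + K + 3 by ring] at h
      rw [eq_div_iff (by positivity : (N+K+2:ℝ) ≠ 0)]
      linarith [h]
    have hb3 : betaCoef K (n + 2) m
        = risingFactorial (1 - K) m *
            (risingFactorial (N + 2) m * (N + 2 + m) / (N + 2)) /
          ((m.factorial : ℝ) *
            (risingFactorial (N + K + 2) m * (N + K + 2 + m) / (N + K + 2))) := by
      rw [betaCoef]
      push_cast
      rw [show (N + 2 + 1 : ℝ) = N + 3 by ring,
        show (N + 2 + K + 1 : ℝ) = N + K + 3 by ring, hrfb, hrfc]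
    have hb4 : betaCoef (K + 1) n (m + 1)
        = ((-K) * risingFactorial (1 - K) m) * ((N + 1) * risingFactorial (N + 2) m) /
          ((((m:ℝ) + 1) * (m.factorial : ℝ)) *
            (risingFactorial (N + K + 2) m * (N + K + 2 + m))) := by
      rw [betaCoef]
      rw [show (1 - (K + 1) : ℝ) = -K by ring, rf_succ',
        show (-K + 1 : ℝ) = 1 - K by ring,
        rf_succ' (N + 1), show (N + 1 + 1 : ℝ) = N + 2 by ring,
        show (N + (K + 1) + 1 : ℝ) = N + K + 2 by ring, rf_succ, Nat.factorial_succ]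
      push_cast
      ring
    rw [hg1, hg2, hg3, hb1, hb2, hb3, hb4]
    have h1 : (0:ℝ) < N + K + 2 + m := by positivity
    have h2 : (N + 2 : ℝ) ≠ 0 := by positivity
    have h3 : (N + K + 2 : ℝ) ≠ 0 := by positivity
    field_simp
    ring
end

section
/- Let λ > 0 be a non-integer real number and n ≥ 0 an integer, and set β_{λ,n,μ} := (1−λ)_μ (n+1)_μ/(μ! (n+λ+1)_μ). Then there exists a constant C > 0 (depending on λ and n) such that |β_{λ,n,μ}| ≤ C μ^{−2λ} for all integers μ ≥ 1. -/
open Real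

/-- Key analytic lemma: `t^(-λ) * (t-λ)/t ≤ (t+1)^(-λ)` for `t > 0`, `λ > 0`. -/
lemma key (lam t : ℝ) (hlam : 0 < lam) (ht : 0 < t) :
    t ^ (-lam) * ((t - lam) / t) ≤ (t + 1) ^ (-lam) := by
  rw [Real.rpow_def_of_pos ht, Real.rpow_def_of_pos (by linarith)]
  have h1 : (t - lam) / t ≤ Real.exp (-(lam / t)) := by
    have := Real.add_one_le_exp (-(lam / t))
    have : 1 - lam / t ≤ Real.exp (-(lam / t)) := by linarith
    calc (t - lam) / t = 1 - lam / t := by field_simp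
      _ ≤ _ := this
  have hlog : Real.log (t + 1) ≤ Real.log t + 1 / t := by
    have h2 : Real.log ((t + 1) / t) ≤ (t + 1) / t - 1 :=
      Real.log_le_sub_one_of_pos (by positivity)
    rw [Real.log_div (by linarith) (ne_of_gt ht)] at h2
    have : (t + 1) / t - 1 = 1 / t := by field_simp; ring
    linarith [this ▸ h2]
  calc Real.exp (Real.log t * -lam) * ((t - lam) / t)
      ≤ Real.exp (Real.log t * -lam) * Real.exp (-(lam / t)) :=
        mul_le_mul_of_nonneg_left h1 (Real.exp_pos _).le
    _ = Real.exp (-lam * (Real.log t + 1 / t)) := by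
        rw [← Real.exp_add]; ring_nf
    _ ≤ Real.exp (Real.log (t + 1) * -lam) := by
        apply Real.exp_le_exp.mpr
        nlinarith

lemma beta_rec (lam : ℝ) (hlam : 0 < lam) (n μ : ℕ) :
    betaCoef lam n (μ + 1) =
      betaCoef lam n μ *
        ((1 - lam + μ) * ((n : ℝ) + 1 + μ) / (((μ : ℝ) + 1) * ((n : ℝ) + lam + 1 + μ))) := by
  have hR : risingFactorial ((n : ℝ) + lam + 1) μ ≠ 0 := by
    apply ne_of_gt
    apply Finset.prod_pos
    intro i _
    have : (0:ℝ) ≤ (n:ℝ) := Nat.cast_nonneg n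
    have : (0:ℝ) ≤ (i:ℝ) := Nat.cast_nonneg i
    positivity
  have hf : ((μ.factorial : ℝ)) ≠ 0 := by
    exact_mod_cast Nat.factorial_ne_zero μ
  have hμ1 : ((μ : ℝ) + 1) ≠ 0 := by positivity
  have hd : ((n : ℝ) + lam + 1 + μ) ≠ 0 := by
    have : (0:ℝ) ≤ (n:ℝ) := Nat.cast_nonneg n
    have : (0:ℝ) ≤ (μ:ℝ) := Nat.cast_nonneg μ
    positivity
  unfold betaCoef risingFactorial
  rw [Finset.prod_range_succ, Finset.prod_range_succ, Finset.prod_range_succ]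
  unfold risingFactorial at hR
  rw [Nat.factorial_succ]
  push_cast
  field_simp

/-- for non-integer `λ > 0` and `n ≥ 0`, there is a constant
`C > 0` (depending on `λ` and `n`) with `|β_{λ,n,μ}| ≤ C μ^(-2λ)` for all
`μ ≥ 1`. -/
theorem betaCoef_decay (lam : ℝ) (hlam : 0 < lam) (hnotint : ∀ m : ℕ, lam ≠ (m : ℝ))
    (n : ℕ) :
    ∃ c : ℝ, 0 < c ∧ ∀ μ : ℕ, 1 ≤ μ →
      |betaCoef lam n μ| ≤ c * (μ : ℝ) ^ (-(2 * lam)) := by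
  set a : ℝ := (n : ℝ) + 1 + lam with ha
  have hnn : (0:ℝ) ≤ (n:ℝ) := Nat.cast_nonneg n
  have hapos : 0 < a := by positivity
  set μ0 : ℕ := ⌈lam⌉₊ with hμ0def
  have hμ0lam : lam ≤ (μ0 : ℝ) := Nat.le_ceil lam
  have hμ01 : 1 ≤ μ0 := Nat.one_le_ceil_iff.mpr hlam
  set B : ℝ := |betaCoef lam n μ0| * ((μ0:ℝ) + 1) ^ lam * ((μ0:ℝ) + a) ^ lam with hB
  have hBnn : 0 ≤ B := by positivity
  have main : ∀ k : ℕ, |betaCoef lam n (μ0 + k)| ≤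
      B * (((μ0 + k : ℕ) : ℝ) + 1) ^ (-lam) * (((μ0 + k : ℕ) : ℝ) + a) ^ (-lam) := by
    intro k
    induction k with
    | zero =>
      simp only [Nat.add_zero]
      have h1 : ((μ0:ℝ)+1) ^ lam * ((μ0:ℝ)+1) ^ (-lam) = 1 := by
        rw [← Real.rpow_add (by positivity)]; simp
      have h2 : ((μ0:ℝ)+a) ^ lam * ((μ0:ℝ)+a) ^ (-lam) = 1 := by
        rw [← Real.rpow_add (by positivity)]; simp
      have : B * ((μ0:ℝ) + 1) ^ (-lam) * ((μ0:ℝ) + a) ^ (-lam)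
          = |betaCoef lam n μ0| * (((μ0:ℝ)+1) ^ lam * ((μ0:ℝ)+1) ^ (-lam))
            * (((μ0:ℝ)+a) ^ lam * ((μ0:ℝ)+a) ^ (-lam)) := by rw [hB]; ring
      rw [this, h1, h2, mul_one, mul_one]
    | succ k ih =>
      have hstep : μ0 + (k + 1) = (μ0 + k) + 1 := by ring
      rw [hstep, beta_rec lam hlam n (μ0 + k)]
      set m : ℝ := ((μ0 + k : ℕ) : ℝ) with hm
      have hmlam : lam ≤ m := by
        have : (μ0 : ℝ) ≤ m := by rw [hm]; exact_mod_cast Nat.le_add_right μ0 k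
        linarith
      have hmpos : 0 < m := lt_of_lt_of_le hlam hmlam
      have hd1 : (0:ℝ) < m + 1 := by linarith
      have hd2 : (0:ℝ) < (n:ℝ) + lam + 1 + m := by linarith
      have hnum1 : (0:ℝ) < 1 - lam + m := by linarith
      have hnum2 : (0:ℝ) < (n:ℝ) + 1 + m := by linarith
      have hr : (1 - lam + m) * ((n : ℝ) + 1 + m) / ((m + 1) * ((n : ℝ) + lam + 1 + m))
          = (((m+1) - lam) / (m+1)) * ((((m+a) - lam)) / (m+a)) := by
        rw [ha]
        field_simp
        ring
      rw [abs_mul, hr]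
      have hrnn1 : (0:ℝ) ≤ ((m+1) - lam) / (m+1) := by
        apply div_nonneg <;> linarith
      have hrnn2 : (0:ℝ) ≤ ((m+a) - lam) / (m+a) := by
        apply div_nonneg
        · rw [ha]; linarith
        · linarith
      rw [abs_of_nonneg (mul_nonneg hrnn1 hrnn2)]
      have step1 : |betaCoef lam n (μ0 + k)| * ((((m+1) - lam) / (m+1)) * (((m+a) - lam) / (m+a)))
          ≤ (B * (m + 1) ^ (-lam) * (m + a) ^ (-lam)) *
            ((((m+1) - lam) / (m+1)) * (((m+a) - lam) / (m+a))) :=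
        mul_le_mul_of_nonneg_right ih (mul_nonneg hrnn1 hrnn2)
      refine le_trans step1 ?_
      have k1 := key lam (m+1) hlam hd1
      have k2 := key lam (m+a) hlam (by linarith)
      have hprod : ((m+1) ^ (-lam) * (((m+1) - lam) / (m+1))) *
          ((m+a) ^ (-lam) * (((m+a) - lam) / (m+a))) ≤ (m+1+1) ^ (-lam) * (m+a+1) ^ (-lam) := by
        apply mul_le_mul k1 k2 (mul_nonneg (Real.rpow_nonneg (by linarith) _) hrnn2)
          (Real.rpow_nonneg (by linarith) _)
      have hcast : ((μ0 + k + 1 : ℕ) : ℝ) = m + 1 := by push_cast [hm]; ring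
      rw [hcast]
      have hre : (m + 1 + a) = (m + a + 1) := by ring
      rw [hre]
      calc B * (m + 1) ^ (-lam) * (m + a) ^ (-lam) *
            ((((m+1) - lam) / (m+1)) * (((m+a) - lam) / (m+a)))
          = B * (((m+1) ^ (-lam) * (((m+1) - lam) / (m+1))) *
              ((m+a) ^ (-lam) * (((m+a) - lam) / (m+a)))) := by ring
        _ ≤ B * ((m+1+1) ^ (-lam) * (m+a+1) ^ (-lam)) :=
            mul_le_mul_of_nonneg_left hprod hBnn
        _ = B * (m + 1 + 1) ^ (-lam) * (m + a + 1) ^ (-lam) := by ring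
  -- assemble constant
  set S : ℝ := ∑ μ ∈ Finset.Ico 1 μ0, |betaCoef lam n μ| * (μ : ℝ) ^ (2 * lam) with hS
  have hSnn : 0 ≤ S := by
    apply Finset.sum_nonneg
    intro i hi
    have : (0:ℝ) ≤ (i:ℝ) := Nat.cast_nonneg i
    positivity
  refine ⟨B + 1 + S, by linarith, ?_⟩
  intro μ hμ
  have hμpos : (0:ℝ) < (μ:ℝ) := by exact_mod_cast hμ
  by_cases hcase : μ0 ≤ μ
  · obtain ⟨k, hk⟩ := Nat.exists_eq_add_of_le hcase
    have hmain := main k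
    rw [← hk] at hmain
    have h1 : ((μ:ℝ) + 1) ^ (-lam) ≤ (μ:ℝ) ^ (-lam) :=
      Real.rpow_le_rpow_of_nonpos hμpos (by linarith) (by linarith)
    have h2 : ((μ:ℝ) + a) ^ (-lam) ≤ (μ:ℝ) ^ (-lam) :=
      Real.rpow_le_rpow_of_nonpos hμpos (by linarith) (by linarith)
    have hmm : (μ:ℝ) ^ (-lam) * (μ:ℝ) ^ (-lam) = (μ:ℝ) ^ (-(2*lam)) := by
      rw [← Real.rpow_add hμpos]; ring_nf
    calc |betaCoef lam n μ| ≤ B * ((μ:ℝ) + 1) ^ (-lam) * ((μ:ℝ) + a) ^ (-lam) := hmain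
      _ ≤ B * ((μ:ℝ) ^ (-lam) * (μ:ℝ) ^ (-lam)) := by
          have hx1 : (0:ℝ) ≤ ((μ:ℝ) + 1) ^ (-lam) := Real.rpow_nonneg (by linarith) _
          have hx2 : (0:ℝ) ≤ (μ:ℝ) ^ (-lam) := Real.rpow_nonneg (by linarith) _
          nlinarith [mul_le_mul h1 h2 (Real.rpow_nonneg (by linarith : (0:ℝ) ≤ (μ:ℝ)+a) _) hx2]
      _ = B * (μ:ℝ) ^ (-(2*lam)) := by rw [hmm]
      _ ≤ (B + 1 + S) * (μ:ℝ) ^ (-(2*lam)) := by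
          apply mul_le_mul_of_nonneg_right (by linarith) (Real.rpow_nonneg hμpos.le _)
  · push_neg at hcase
    have hmem : μ ∈ Finset.Ico 1 μ0 := Finset.mem_Ico.mpr ⟨hμ, hcase⟩
    have hterm : |betaCoef lam n μ| * (μ : ℝ) ^ (2 * lam) ≤ S := by
      apply Finset.single_le_sum (f := fun i => |betaCoef lam n i| * (i : ℝ) ^ (2 * lam))
        (fun i hi => by positivity) hmem
    have hone : (μ:ℝ) ^ (2*lam) * (μ:ℝ) ^ (-(2*lam)) = 1 := by
      rw [← Real.rpow_add hμpos]; simp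
    calc |betaCoef lam n μ| = |betaCoef lam n μ| * ((μ:ℝ) ^ (2*lam) * (μ:ℝ) ^ (-(2*lam))) := by
          rw [hone, mul_one]
      _ = (|betaCoef lam n μ| * (μ:ℝ) ^ (2*lam)) * (μ:ℝ) ^ (-(2*lam)) := by ring
      _ ≤ (B + 1 + S) * (μ:ℝ) ^ (-(2*lam)) := by
          apply mul_le_mul_of_nonneg_right (by linarith) (Real.rpow_nonneg hμpos.le _)
end

section
/- Let d > 1 be an integer, c ∈ (0, π/2], and β ∈ ℝ. Define ψ_β(θ) := −cos c/(1−cos c) + ((d+1) cos c + 1)β/d + (1/(1−cos c) − (d+1)(1+cos c)β/d) cos θ + β((d+1) cos²θ − 1)/d. Then ψ_β(0) = 1 and ψ_β(c) = 0, and the three coefficients of ψ_β in the expansion into the normalized Gegenbauer polynomials 1, cos θ, ((d+1)cos²θ − 1)/d are all nonnegative if and only if d cos c/((1−cos c)((d+1) cos c + 1)) ≤ β ≤ d/((d+1) sin² c). Moreover, this interval of admissible β is nonempty if and only if c ≥ arccos √(1/(d+1)). -/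
open Real

set_option maxHeartbeats 2000000 in
/-- for integer `d > 1`, `c ∈ (0, π/2]` and `β ∈ ℝ`, the function
`ψ_β(θ) = -cos c/(1-cos c) + ((d+1)cos c + 1)β/d
  + (1/(1-cos c) - (d+1)(1+cos c)β/d) cos θ + β((d+1)cos²θ - 1)/d`
satisfies `ψ_β(0) = 1` and `ψ_β(c) = 0`; its three coefficients in the basis
`1, cos θ, ((d+1)cos²θ - 1)/d` are all nonnegative iff
`d cos c/((1-cos c)((d+1)cos c + 1)) ≤ β ≤ d/((d+1) sin² c)`; and this interval
is nonempty iff `c ≥ arccos √(1/(d+1))`. -/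
theorem psi_beta_properties
    (d : ℕ) (hd : 1 < d) (c : ℝ) (hc : c ∈ Set.Ioc 0 (π / 2)) (β : ℝ) :
    (fun θ : ℝ =>
        -Real.cos c / (1 - Real.cos c) + (((d : ℝ) + 1) * Real.cos c + 1) * β / d
        + (1 / (1 - Real.cos c) - ((d : ℝ) + 1) * (1 + Real.cos c) * β / d) * Real.cos θ
        + β * (((d : ℝ) + 1) * (Real.cos θ) ^ 2 - 1) / d) 0 = 1
    ∧ (fun θ : ℝ =>
        -Real.cos c / (1 - Real.cos c) + (((d : ℝ) + 1) * Real.cos c + 1) * β / d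
        + (1 / (1 - Real.cos c) - ((d : ℝ) + 1) * (1 + Real.cos c) * β / d) * Real.cos θ
        + β * (((d : ℝ) + 1) * (Real.cos θ) ^ 2 - 1) / d) c = 0
    ∧ ((0 ≤ -Real.cos c / (1 - Real.cos c) + (((d : ℝ) + 1) * Real.cos c + 1) * β / d
        ∧ 0 ≤ 1 / (1 - Real.cos c) - ((d : ℝ) + 1) * (1 + Real.cos c) * β / d
        ∧ 0 ≤ β)
       ↔ ((d : ℝ) * Real.cos c / ((1 - Real.cos c) * (((d : ℝ) + 1) * Real.cos c + 1)) ≤ β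
          ∧ β ≤ (d : ℝ) / (((d : ℝ) + 1) * (Real.sin c) ^ 2)))
    ∧ ((d : ℝ) * Real.cos c / ((1 - Real.cos c) * (((d : ℝ) + 1) * Real.cos c + 1))
          ≤ (d : ℝ) / (((d : ℝ) + 1) * (Real.sin c) ^ 2)
       ↔ Real.arccos (Real.sqrt (1 / ((d : ℝ) + 1))) ≤ c) := by
  obtain ⟨hc0, hc2⟩ := hc
  have hpi : (0:ℝ) < π := Real.pi_pos
  set x := Real.cos c with hxdef
  have hdp : (0:ℝ) < (d : ℝ) := by exact_mod_cast Nat.zero_lt_of_lt hd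
  have hx0 : 0 ≤ x := Real.cos_nonneg_of_mem_Icc ⟨by linarith, hc2⟩
  have hx1 : x < 1 := by
    have := Real.cos_lt_cos_of_nonneg_of_le_pi (le_refl 0) (by linarith) hc0
    simpa using this
  have hA : 0 < 1 - x := by linarith
  have hB : 0 < ((d : ℝ) + 1) * x + 1 := by nlinarith
  have hsin : Real.sin c ^ 2 = 1 - x ^ 2 := by
    rw [Real.sin_sq]
  have hC : 0 < ((d : ℝ) + 1) * (Real.sin c) ^ 2 := by
    rw [hsin]; nlinarith
  refine ⟨?_, ?_, ?_, ?_⟩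
  · simp only [Real.cos_zero]
    field_simp
    ring
  · simp only
    field_simp
    ring
  · constructor
    · rintro ⟨h1, h2, _⟩
      have h1' : 0 ≤ -x * (d : ℝ) + (((d : ℝ) + 1) * x + 1) * β * (1 - x) := by
        have key : (-x / (1 - x) + (((d : ℝ) + 1) * x + 1) * β / d) * ((1 - x) * d)
            = -x * (d : ℝ) + (((d : ℝ) + 1) * x + 1) * β * (1 - x) := by
          field_simp
        have := mul_nonneg h1 (le_of_lt (mul_pos hA hdp))
        rwa [key] at this
      have h2' : 0 ≤ (d : ℝ) - ((d : ℝ) + 1) * (1 + x) * β * (1 - x) := by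
        have key : (1 / (1 - x) - ((d : ℝ) + 1) * (1 + x) * β / d) * ((1 - x) * d)
            = (d : ℝ) - ((d : ℝ) + 1) * (1 + x) * β * (1 - x) := by
          field_simp
        have := mul_nonneg h2 (le_of_lt (mul_pos hA hdp))
        rwa [key] at this
      constructor
      · rw [div_le_iff₀ (by positivity)]
        nlinarith
      · rw [le_div_iff₀ hC, hsin]
        nlinarith
    · rintro ⟨hL, hU⟩
      have hβ : 0 ≤ β := le_trans (by positivity) hL
      have hL' : (d : ℝ) * x ≤ β * ((1 - x) * (((d : ℝ) + 1) * x + 1)) :=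
        (div_le_iff₀ (by positivity)).mp hL
      have hU' : β * (((d : ℝ) + 1) * (1 - x ^ 2)) ≤ (d : ℝ) := by
        have := (le_div_iff₀ hC).mp hU
        rwa [hsin] at this
      refine ⟨?_, ?_, hβ⟩
      · have key : -x / (1 - x) + (((d : ℝ) + 1) * x + 1) * β / d
            = (-x * (d : ℝ) + (((d : ℝ) + 1) * x + 1) * β * (1 - x)) / ((1 - x) * d) := by
          field_simp
        rw [key]
        apply div_nonneg _ (le_of_lt (mul_pos hA hdp))
        nlinarith
      · have key : 1 / (1 - x) - ((d : ℝ) + 1) * (1 + x) * β / d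
            = ((d : ℝ) - ((d : ℝ) + 1) * (1 + x) * β * (1 - x)) / ((1 - x) * d) := by
          field_simp
        rw [key]
        apply div_nonneg _ (le_of_lt (mul_pos hA hdp))
        nlinarith
  · set t := Real.sqrt (1 / ((d : ℝ) + 1)) with htdef
    have ht0 : 0 ≤ t := Real.sqrt_nonneg _
    have ht1 : t ≤ 1 := by
      rw [htdef]
      rw [show (1:ℝ) = Real.sqrt 1 by simp]
      apply Real.sqrt_le_sqrt
      rw [div_le_one (by positivity)]
      linarith
    have htsq : t ^ 2 = 1 / ((d : ℝ) + 1) := Real.sq_sqrt (by positivity)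
    have hmem_x : x ∈ Set.Icc (-1:ℝ) 1 := ⟨by linarith, hx1.le⟩
    have hmem_t : t ∈ Set.Icc (-1:ℝ) 1 := ⟨by linarith, ht1⟩
    have hax : Real.arccos x = c := Real.arccos_cos hc0.le (by linarith)
    have key : ((d : ℝ) * x / ((1 - x) * (((d : ℝ) + 1) * x + 1))
          ≤ (d : ℝ) / (((d : ℝ) + 1) * (Real.sin c) ^ 2)) ↔ x ≤ t := by
      rw [div_le_div_iff₀ (by positivity) hC, hsin]
      constructor
      · intro h
        have hx2 : x ^ 2 ≤ t ^ 2 := by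
          rw [htsq, le_div_iff₀ (by positivity)]
          nlinarith [mul_pos hdp hA]
        exact le_of_pow_le_pow_left₀ (n := 2) (by norm_num) ht0 hx2
      · intro h
        have hx2 : x ^ 2 ≤ t ^ 2 := pow_le_pow_left₀ hx0 h 2
        rw [htsq] at hx2
        have hx2' : ((d : ℝ) + 1) * x ^ 2 ≤ 1 := by
          rw [le_div_iff₀ (by positivity)] at hx2
          linarith [hx2]
        have h' : 0 ≤ (d : ℝ) * (1 - x) * (1 - ((d : ℝ) + 1) * x ^ 2) :=
          mul_nonneg (mul_nonneg hdp.le hA.le) (by linarith)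
        nlinarith [h']
    rw [key, ← hax]
    exact (Real.strictAntiOn_arccos.le_iff_ge hmem_t hmem_x).symm
end

section
/- Let α > 0 and let m ≥ 0 be an even integer. Then ∫₀^π e^{−θ/α} (cos θ)^m sin θ dθ = ((1 + e^{−π/α})/((m+1) 2^m)) · [ 2^m − Σ_{k=0}^{m/2} binom(m+1, (m−2k)/2) / ((2k+1)² α² + 1) ]. -/
open Real Finset

private lemma cexp_sum (n : ℕ) (z : ℂ) :
    ∑ j ∈ Finset.range (n+1), (n.choose j : ℂ) *
      Complex.exp ((((n:ℤ) - 2*j : ℤ) : ℂ) * z * Complex.I) = (2 * Complex.cos z) ^ n := by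
  rw [Complex.two_cos, add_comm (Complex.exp (z * Complex.I)) (Complex.exp (-z * Complex.I)), add_pow]
  refine Finset.sum_congr rfl fun j hj => ?_
  have hj' : j ≤ n := Nat.lt_succ_iff.mp (Finset.mem_range.mp hj)
  rw [← Complex.exp_nat_mul, ← Complex.exp_nat_mul, ← Complex.exp_add, mul_comm]
  congr 2
  push_cast [Nat.cast_sub hj']
  ring

private lemma ccos_sum (n : ℕ) (z : ℂ) :
    ∑ j ∈ Finset.range (n+1), (n.choose j : ℂ) *
      Complex.cos ((((n:ℤ) - 2*j : ℤ) : ℂ) * z) = (2 * Complex.cos z) ^ n := by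
  have h2 : ∑ j ∈ Finset.range (n+1), (n.choose j : ℂ) *
      Complex.exp (-((((n:ℤ) - 2*j : ℤ) : ℂ) * z * Complex.I)) = (2 * Complex.cos z) ^ n := by
    rw [← cexp_sum n z]
    rw [← Finset.sum_range_reflect (fun j => (n.choose j : ℂ) *
      Complex.exp ((((n:ℤ) - 2*j : ℤ) : ℂ) * z * Complex.I)) (n+1)]
    refine Finset.sum_congr rfl fun j hj => ?_
    have hj' : j ≤ n := Nat.lt_succ_iff.mp (Finset.mem_range.mp hj)
    have h1 : n + 1 - 1 - j = n - j := by omega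
    rw [h1, Nat.choose_symm hj']
    congr 2
    push_cast [Nat.cast_sub hj']
    ring
  have key : (2:ℂ) * (∑ j ∈ Finset.range (n+1), (n.choose j : ℂ) *
      Complex.cos ((((n:ℤ) - 2*j : ℤ) : ℂ) * z)) = (2 * Complex.cos z) ^ n + (2 * Complex.cos z) ^ n := by
    nth_rewrite 2 [← h2]
    rw [← cexp_sum n z, Finset.mul_sum, ← Finset.sum_add_distrib]
    refine Finset.sum_congr rfl fun j hj => ?_
    have := Complex.two_cos ((((n:ℤ) - 2*j : ℤ) : ℂ) * z)
    rw [neg_mul] at this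
    linear_combination (n.choose j : ℂ) * this
  linear_combination key / 2

private lemma rcos_sum (n : ℕ) (θ : ℝ) :
    ∑ j ∈ Finset.range (n+1), (n.choose j : ℝ) *
      Real.cos ((((n:ℤ) - 2*j : ℤ) : ℝ) * θ) = (2 * Real.cos θ) ^ n := by
  apply Complex.ofReal_injective
  have h := ccos_sum n (θ:ℂ)
  push_cast [Complex.ofReal_cos] at h ⊢
  exact h

private lemma rsin_sum (n : ℕ) (θ : ℝ) :
    ∑ j ∈ Finset.range (n+1), (n.choose j : ℝ) *
      ((((n:ℤ) - 2*j : ℤ) : ℝ) * Real.sin ((((n:ℤ) - 2*j : ℤ) : ℝ) * θ))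
      = (n : ℝ) * (2 * Real.cos θ) ^ (n-1) * (2 * Real.sin θ) := by
  have hL : HasDerivAt (fun x : ℝ => ∑ j ∈ Finset.range (n+1), (n.choose j : ℝ) *
      Real.cos ((((n:ℤ) - 2*j : ℤ) : ℝ) * x))
      (∑ j ∈ Finset.range (n+1), (n.choose j : ℝ) *
        (-Real.sin ((((n:ℤ) - 2*j : ℤ) : ℝ) * θ) * ((((n:ℤ) - 2*j : ℤ) : ℝ) * 1))) θ :=
    HasDerivAt.fun_sum fun j _ =>
      (((hasDerivAt_id θ).const_mul ((((n:ℤ) - 2*j : ℤ) : ℝ))).cos).const_mul _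
  have hR : HasDerivAt (fun x : ℝ => (2 * Real.cos x) ^ n)
      ((n:ℝ) * (2 * Real.cos θ) ^ (n-1) * (2 * -Real.sin θ)) θ :=
    ((Real.hasDerivAt_cos θ).const_mul 2).pow n
  have heq : (fun x : ℝ => ∑ j ∈ Finset.range (n+1), (n.choose j : ℝ) *
      Real.cos ((((n:ℤ) - 2*j : ℤ) : ℝ) * x)) = fun x => (2 * Real.cos x) ^ n :=
    funext (rcos_sum n)
  rw [heq] at hL
  have huniq := hL.unique hR
  calc ∑ j ∈ Finset.range (n+1), (n.choose j : ℝ) *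
      ((((n:ℤ) - 2*j : ℤ) : ℝ) * Real.sin ((((n:ℤ) - 2*j : ℤ) : ℝ) * θ))
      = -∑ j ∈ Finset.range (n+1), (n.choose j : ℝ) *
        (-Real.sin ((((n:ℤ) - 2*j : ℤ) : ℝ) * θ) * ((((n:ℤ) - 2*j : ℤ) : ℝ) * 1)) := by
        rw [← Finset.sum_neg_distrib]
        exact Finset.sum_congr rfl fun j _ => by ring
    _ = -((n:ℝ) * (2 * Real.cos θ) ^ (n-1) * (2 * -Real.sin θ)) := by rw [huniq]
    _ = (n : ℝ) * (2 * Real.cos θ) ^ (n-1) * (2 * Real.sin θ) := by ring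

/-- for `α > 0` and even `m ≥ 0`,
`∫₀^π e^(-θ/α) (cos θ)^m sin θ dθ
  = ((1 + e^(-π/α))/((m+1) 2^m)) [2^m - Σ_{k=0}^{m/2} binom(m+1,(m-2k)/2)/((2k+1)²α²+1)]`. -/
theorem exp_integral_even
    (α : ℝ) (hα : 0 < α) (m : ℕ) (hm : Even m) :
    ∫ θ in (0 : ℝ)..π, Real.exp (-θ / α) * (Real.cos θ) ^ m * Real.sin θ
      = (1 + Real.exp (-π / α)) / (((m : ℝ) + 1) * 2 ^ m) *
          ((2 : ℝ) ^ m -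
            ∑ k ∈ Finset.range (m / 2 + 1),
              ((m + 1).choose ((m - 2 * k) / 2) : ℝ) /
                ((2 * (k : ℝ) + 1) ^ 2 * α ^ 2 + 1)) := by
  obtain ⟨p, rfl⟩ := hm
  set n : ℕ := p + p + 1 with hn
  set a : ℝ := α⁻¹ with ha
  have ha0 : 0 < a := inv_pos.mpr hα
  have hα0 : α ≠ 0 := ne_of_gt hα
  set c : ℕ → ℝ := fun j => (((n:ℤ) - 2*j : ℤ) : ℝ) with hc
  have hD : ∀ j, a^2 + c j^2 ≠ 0 := fun j =>
    ne_of_gt (add_pos_of_pos_of_nonneg (pow_pos ha0 2) (sq_nonneg _))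
  set K : ℕ → ℝ := fun j => ((n.choose j : ℝ) * (c j / (a^2 + c j^2))) with hK
  set G : ℝ → ℝ := fun θ => (((p+p:ℝ)+1) * 2^(p+p+1))⁻¹ *
    ∑ j ∈ Finset.range (n+1), K j *
      (Real.exp (-θ/α) * (-a * Real.sin (c j * θ) - c j * Real.cos (c j * θ))) with hGdef
  -- derivative of G
  have hG : ∀ x : ℝ, HasDerivAt G
      (Real.exp (-x/α) * Real.cos x ^ (p+p) * Real.sin x) x := by
    intro x
    have hexp : HasDerivAt (fun θ : ℝ => Real.exp (-θ/α)) (Real.exp (-x/α) * -a) x := by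
      have h0 : HasDerivAt (fun θ : ℝ => -θ/α) (-a) x := by
        simpa [neg_div, ha, one_div] using ((hasDerivAt_id x).div_const α).fun_neg
      exact h0.exp
    have hterm : ∀ j, HasDerivAt (fun θ : ℝ => K j *
        (Real.exp (-θ/α) * (-a * Real.sin (c j * θ) - c j * Real.cos (c j * θ))))
        (K j * ((a^2 + c j^2) * (Real.exp (-x/α) * Real.sin (c j * x)))) x := by
      intro j
      have htrig : HasDerivAt (fun θ : ℝ => -a * Real.sin (c j * θ) - c j * Real.cos (c j * θ))
          (-a * (Real.cos (c j * x) * (c j * 1)) - c j * (-Real.sin (c j * x) * (c j * 1))) x :=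
        ((((hasDerivAt_id x).const_mul (c j)).sin).const_mul (-a)).sub
          ((((hasDerivAt_id x).const_mul (c j)).cos).const_mul (c j))
      have h := (hexp.mul htrig).const_mul (K j)
      refine h.congr_deriv ?_
      ring
    have hsum := HasDerivAt.fun_sum (fun j (_ : j ∈ Finset.range (n+1)) => hterm j)
    have h := hsum.const_mul ((((p+p:ℝ)+1) * 2^(p+p+1))⁻¹)
    refine h.congr_deriv ?_
    have hs : ∑ j ∈ Finset.range (n+1), K j *
        ((a^2 + c j^2) * (Real.exp (-x/α) * Real.sin (c j * x)))
        = Real.exp (-x/α) * ∑ j ∈ Finset.range (n+1), (n.choose j : ℝ) *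
          (c j * Real.sin (c j * x)) := by
      rw [Finset.mul_sum]
      refine Finset.sum_congr rfl fun j _ => ?_
      rw [hK]
      field_simp
    rw [hs, rsin_sum n x]
    have h2 : (2 * Real.cos x) ^ (n - 1) = 2^(p+p) * Real.cos x ^ (p+p) := by
      rw [show n - 1 = p + p from rfl, mul_pow]
    rw [h2]
    have hne : ((p+p:ℝ)+1) * 2^(p+p+1) ≠ 0 := by positivity
    field_simp
    push_cast [hn]
    ring
  -- integrability
  have hInt : IntervalIntegrable
      (fun θ => Real.exp (-θ/α) * Real.cos θ ^ (p+p) * Real.sin θ)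
      MeasureTheory.volume 0 π := by
    apply Continuous.intervalIntegrable
    fun_prop
  have hFTC := intervalIntegral.integral_eq_sub_of_hasDerivAt
    (f := G) (fun x _ => hG x) hInt
  rw [show (fun θ => Real.exp (-θ/α) * Real.cos θ ^ (p+p) * Real.sin θ)
      = fun θ => Real.exp (-θ/α) * Real.cos θ ^ (p+p) * Real.sin θ from rfl] at hFTC
  rw [hFTC]
  -- evaluate G π - G 0
  have hsin : ∀ j, Real.sin (c j * π) = 0 := fun j => Real.sin_int_mul_pi _
  have hcos : ∀ j, Real.cos (c j * π) = -1 := by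
    intro j
    have hcj : c j * π = ((p - j : ℤ) : ℝ) * (2 * π) + π := by
      rw [hc]; push_cast [hn]; ring
    rw [hcj, Real.cos_int_mul_two_pi_add_pi]
  have hGpi : G π - G 0 = (((p+p:ℝ)+1) * 2^(p+p+1))⁻¹ * ((1 + Real.exp (-π/α)) *
      ∑ j ∈ Finset.range (n+1), (n.choose j : ℝ) * (c j^2 / (a^2 + c j^2))) := by
    rw [hGdef]
    simp only
    rw [← mul_sub, Finset.mul_sum, ← Finset.sum_sub_distrib]
    congr 1
    refine Finset.sum_congr rfl fun j _ => ?_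
    rw [hsin j, hcos j, hK]
    simp only [mul_zero, Real.sin_zero, Real.cos_zero, neg_zero, zero_div, Real.exp_zero]
    field_simp
    ring
  rw [hGpi]
  -- simplify the sum
  have hfrac : ∀ j, c j^2 / (a^2 + c j^2) = 1 - 1/(c j^2 * α^2 + 1) := by
    intro j
    have h1 : c j^2 * α^2 + 1 ≠ 0 := by positivity
    have h2 : a^2 + c j^2 ≠ 0 := hD j
    rw [ha] at h2 ⊢
    field_simp [hα0] at h2 ⊢
    ring
  have hS : ∑ j ∈ Finset.range (n+1), (n.choose j : ℝ) * (c j^2 / (a^2 + c j^2))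
      = 2^n - ∑ j ∈ Finset.range (n+1), (n.choose j : ℝ) / (c j^2 * α^2 + 1) := by
    rw [show (2:ℝ)^n = ((2^n : ℕ) : ℝ) by push_cast; ring, ← Nat.sum_range_choose n]
    push_cast
    rw [← Finset.sum_sub_distrib]
    refine Finset.sum_congr rfl fun j _ => ?_
    rw [hfrac j]
    ring
  rw [hS]
  -- reflect: full sum = 2 * half sum
  set g : ℕ → ℝ := fun j => (n.choose j : ℝ) / (c j^2 * α^2 + 1) with hg
  have hgsymm : ∀ j ≤ n, g (n - j) = g j := by
    intro j hj
    rw [hg]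
    simp only
    rw [Nat.choose_symm hj]
    have : c (n - j) ^ 2 = c j ^ 2 := by
      rw [hc]; simp only
      have : ((n:ℤ) - 2*(n - j : ℕ)) = -((n:ℤ) - 2*j) := by
        push_cast [Nat.cast_sub hj]; ring
      rw [this]; push_cast; ring
    rw [this]
  have hsplit : ∑ j ∈ Finset.range (n+1), g j
      = 2 * ∑ j ∈ Finset.range (p+1), g j := by
    have h1 : ∑ j ∈ Finset.range (n+1), g j
        = ∑ j ∈ Finset.Ico 0 (p+1), g j + ∑ j ∈ Finset.Ico (p+1) (n+1), g j := by
      rw [Finset.range_eq_Ico, Finset.sum_Ico_consecutive]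
      · omega
      · omega
    have h2 : ∑ j ∈ Finset.Ico 0 (p+1), g (n - j) = ∑ j ∈ Finset.Ico (p+1) (n+1), g j := by
      have h := Finset.sum_Ico_reflect g 0 (show p+1 ≤ n+1 by omega)
      convert h using 3 <;> omega
    have h3 : ∑ j ∈ Finset.Ico 0 (p+1), g (n - j) = ∑ j ∈ Finset.Ico 0 (p+1), g j := by
      refine Finset.sum_congr rfl fun j hj => ?_
      have : j ≤ n := by have := (Finset.mem_Ico.mp hj).2; omega
      exact hgsymm j this
    rw [h1, ← h2, h3, ← Finset.range_eq_Ico]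
    ring
  rw [hsplit]
  -- identify half sum with target sum
  have hhalf : ∑ k ∈ Finset.range ((p+p) / 2 + 1),
      (n.choose (((p+p) - 2 * k) / 2) : ℝ) /
        ((2 * (k : ℝ) + 1) ^ 2 * α ^ 2 + 1)
      = ∑ j ∈ Finset.range (p+1), g j := by
    rw [← Finset.sum_range_reflect g (p+1)]
    have hpp : (p+p)/2 = p := by omega
    rw [hpp]
    refine Finset.sum_congr rfl fun k hk => ?_
    have hk' : k ≤ p := Nat.lt_succ_iff.mp (Finset.mem_range.mp hk)
    have hidx : p + 1 - 1 - k = p - k := by omega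
    rw [hidx, hg]
    simp only
    have hch : ((p+p) - 2 * k) / 2 = p - k := by omega
    have hcc : c (p - k) = 2 * (k:ℝ) + 1 := by
      rw [hc]; simp only
      have : ((n:ℤ) - 2*((p - k : ℕ):ℤ)) = 2*k + 1 := by
        push_cast [Nat.cast_sub hk', hn]; ring
      rw [this]; push_cast; ring
    rw [hch, hcc]
  rw [← hhalf]
  -- final algebra
  have h2n : (2:ℝ)^n = 2 * 2^(p+p) := by rw [hn]; ring
  rw [h2n]
  have hne : ((p+p:ℝ)+1) * 2^(p+p+1) ≠ 0 := by positivity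
  have hne2 : (((p+p:ℕ):ℝ)+1) * 2^(p+p) ≠ 0 := by positivity
  push_cast
  field_simp
end

section
/- Let α > 0 and let m ≥ 1 be an odd integer. Then ∫₀^π e^{−θ/α} (cos θ)^m sin θ dθ = ((1 − e^{−π/α})/((m+1) 2^m)) · [ 2^m − (1/2) binom(m+1, (m+1)/2) − Σ_{k=1}^{(m+1)/2} binom(m+1, (m−2k+1)/2) / (4k² α² + 1) ]. -/
open Real

private lemma exp_pow_term (θ : ℝ) (n j : ℕ) (hj : j ≤ n) :
    Complex.exp (θ * Complex.I) ^ j * Complex.exp (-(θ * Complex.I)) ^ (n - j)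
      = Complex.exp ((2 * (j:ℂ) - (n:ℂ)) * (θ * Complex.I)) := by
  rw [← Complex.exp_nat_mul, ← Complex.exp_nat_mul, ← Complex.exp_add]
  congr 1
  rw [Nat.cast_sub hj]; ring

lemma two_cos_pow (n : ℕ) (θ : ℝ) :
    (2 * Real.cos θ) ^ n
      = ∑ j ∈ Finset.range (n + 1), (n.choose j : ℝ) * Real.cos (((n : ℝ) - 2 * j) * θ) := by
  have hbin : (Complex.exp (θ * Complex.I) + Complex.exp (-(θ * Complex.I))) ^ n
      = ∑ j ∈ Finset.range (n + 1),
          Complex.exp ((2 * (j:ℂ) - (n:ℂ)) * (θ * Complex.I)) * (n.choose j : ℂ) := by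
    rw [add_pow]
    refine Finset.sum_congr rfl fun j hj => ?_
    rw [exp_pow_term θ n j (Finset.mem_range_succ_iff.mp hj)]
  have hbin' : (Complex.exp (θ * Complex.I) + Complex.exp (-(θ * Complex.I))) ^ n
      = ∑ j ∈ Finset.range (n + 1),
          Complex.exp (((n:ℂ) - 2 * (j:ℂ)) * (θ * Complex.I)) * (n.choose j : ℂ) := by
    rw [hbin, ← Finset.sum_range_reflect]
    refine Finset.sum_congr rfl fun j hj => ?_
    have hj' : j ≤ n := Finset.mem_range_succ_iff.mp hj
    have hidx : n + 1 - 1 - j = n - j := by omega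
    rw [hidx, Nat.cast_sub hj', Nat.choose_symm hj']
    ring_nf
  have h2c : (2 * Complex.cos (θ:ℂ))
      = Complex.exp ((θ:ℂ) * Complex.I) + Complex.exp (-((θ:ℂ) * Complex.I)) := by
    rw [Complex.two_cos]; ring_nf
  have key : (2 * Complex.cos (θ:ℂ)) ^ n + (2 * Complex.cos (θ:ℂ)) ^ n
      = ∑ j ∈ Finset.range (n + 1),
          (2 * Complex.cos (((n:ℂ) - 2 * (j:ℂ)) * (θ:ℂ))) * (n.choose j : ℂ) := by
    rw [h2c]
    nth_rewrite 1 [hbin]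
    nth_rewrite 1 [hbin']
    rw [← Finset.sum_add_distrib]
    refine Finset.sum_congr rfl fun j hj => ?_
    rw [Complex.two_cos]
    have h1 : (2 * (j:ℂ) - (n:ℂ)) * ((θ:ℂ) * Complex.I)
        = -(((n:ℂ) - 2 * (j:ℂ)) * (θ:ℂ)) * Complex.I := by ring
    have h2 : ((n:ℂ) - 2 * (j:ℂ)) * ((θ:ℂ) * Complex.I)
        = (((n:ℂ) - 2 * (j:ℂ)) * (θ:ℂ)) * Complex.I := by ring
    rw [h1, h2]; ring
  have keyC : (2 * Complex.cos (θ:ℂ)) ^ n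
      = ∑ j ∈ Finset.range (n + 1), (n.choose j : ℂ) * Complex.cos (((n:ℂ) - 2 * (j:ℂ)) * (θ:ℂ)) := by
    apply mul_left_cancel₀ (two_ne_zero' ℂ)
    rw [two_mul, key, Finset.mul_sum]
    exact Finset.sum_congr rfl fun j _ => by ring
  have : (((2 * Real.cos θ) ^ n : ℝ) : ℂ)
      = ((∑ j ∈ Finset.range (n + 1), (n.choose j : ℝ) * Real.cos (((n : ℝ) - 2 * j) * θ) : ℝ) : ℂ) := by
    push_cast
    convert keyC using 2 with j hj
  exact_mod_cast this


private lemma hasDeriv_G (α b : ℝ) (hα : α ≠ 0) (θ : ℝ) :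
    HasDerivAt (fun t : ℝ => Real.exp (-t/α) * (-(1/α) * Real.cos (b*t) + b * Real.sin (b*t)))
      ((1/α^2 + b^2) * (Real.exp (-θ/α) * Real.cos (b*θ))) θ := by
  have h1 : HasDerivAt (fun t : ℝ => Real.exp (-t/α)) (Real.exp (-θ/α) * (-(1/α))) θ := by
    have h : HasDerivAt (fun t : ℝ => -t/α) (-(1/α)) θ := by
      simpa [neg_div] using (hasDerivAt_neg θ).div_const α
    exact h.exp
  have hb : HasDerivAt (fun t : ℝ => b * t) b θ := by
    simpa using (hasDerivAt_id θ).const_mul b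
  have hc : HasDerivAt (fun t : ℝ => Real.cos (b*t)) (-Real.sin (b*θ) * b) θ := hb.cos
  have hs : HasDerivAt (fun t : ℝ => Real.sin (b*t)) (Real.cos (b*θ) * b) θ := hb.sin
  have := h1.fun_mul ((hc.const_mul (-(1/α))).fun_add (hs.const_mul b))
  refine this.congr_deriv ?_
  field_simp
  ring

private lemma integral_exp_cos (α : ℝ) (hα : 0 < α) (b : ℝ)
    (hb : Real.cos (b * π) = 1) (hs : Real.sin (b * π) = 0) :
    ∫ θ in (0:ℝ)..π, Real.exp (-θ/α) * Real.cos (b * θ)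
      = α * (1 - Real.exp (-π/α)) / (1 + b^2 * α^2) := by
  have hα' : α ≠ 0 := ne_of_gt hα
  have hD : (0:ℝ) < 1/α^2 + b^2 := by positivity
  have hint : IntervalIntegrable
      (fun θ : ℝ => (1/α^2 + b^2) * (Real.exp (-θ/α) * Real.cos (b*θ))) MeasureTheory.volume 0 π := by
    apply Continuous.intervalIntegrable
    fun_prop
  have h := intervalIntegral.integral_eq_sub_of_hasDerivAt
    (f := fun t : ℝ => Real.exp (-t/α) * (-(1/α) * Real.cos (b*t) + b * Real.sin (b*t)))
    (fun x _ => hasDeriv_G α b hα' x) hint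
  rw [intervalIntegral.integral_const_mul] at h
  have h0 : Real.exp (-(0:ℝ)/α) = 1 := by norm_num
  simp only [hb, hs, h0, mul_zero, mul_one, Real.cos_zero, Real.sin_zero, add_zero, one_mul] at h
  have : ∫ θ in (0:ℝ)..π, Real.exp (-θ/α) * Real.cos (b * θ)
      = (Real.exp (-π/α) * (-(1/α)) - (-(1/α))) / (1/α^2 + b^2) := by
    rw [eq_div_iff (ne_of_gt hD), mul_comm]
    convert h using 2 <;> ring
  rw [this]
  rw [div_eq_div_iff (ne_of_gt hD) (by positivity)]
  field_simp
  ring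


private lemma integral_exp_cos_pow (α : ℝ) (hα : 0 < α) (p : ℕ)
    (hI : ∀ b : ℝ, Real.cos (b * π) = 1 → Real.sin (b * π) = 0 →
      ∫ θ in (0:ℝ)..π, Real.exp (-θ/α) * Real.cos (b * θ)
        = α * (1 - Real.exp (-π/α)) / (1 + b^2 * α^2))
    (htcp : ∀ n : ℕ, ∀ θ : ℝ, (2 * Real.cos θ) ^ n
      = ∑ j ∈ Finset.range (n + 1), (n.choose j : ℝ) * Real.cos (((n : ℝ) - 2 * j) * θ)) :
    ∫ θ in (0:ℝ)..π, Real.exp (-θ/α) * Real.cos θ ^ (2*p)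
      = α * (1 - Real.exp (-π/α)) / 2^(2*p) *
          ∑ j ∈ Finset.range (2*p+1), ((2*p).choose j : ℝ) / (1 + ((2*p:ℝ) - 2*j)^2 * α^2) := by
  have hrw : ∀ θ : ℝ, Real.exp (-θ/α) * Real.cos θ ^ (2*p)
      = (1/2^(2*p)) * ∑ j ∈ Finset.range (2*p+1),
          ((2*p).choose j : ℝ) * (Real.exp (-θ/α) * Real.cos (((2*p:ℝ) - 2*j) * θ)) := by
    intro θ
    have h := htcp (2*p) θ
    rw [mul_pow] at h
    push_cast at h
    have hsum : ∑ j ∈ Finset.range (2*p+1),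
        ((2*p).choose j : ℝ) * (Real.exp (-θ/α) * Real.cos (((2*p:ℝ) - 2*j) * θ))
        = Real.exp (-θ/α) * ∑ j ∈ Finset.range (2*p+1),
            ((2*p).choose j : ℝ) * Real.cos (((2*p:ℝ) - 2*j) * θ) := by
      rw [Finset.mul_sum]
      exact Finset.sum_congr rfl fun j _ => by push_cast; ring
    rw [hsum, ← h]
    field_simp
  have hcong : (∫ θ in (0:ℝ)..π, Real.exp (-θ/α) * Real.cos θ ^ (2*p))
      = ∫ θ in (0:ℝ)..π, (1/2^(2*p)) * ∑ j ∈ Finset.range (2*p+1),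
          ((2*p).choose j : ℝ) * (Real.exp (-θ/α) * Real.cos (((2*p:ℝ) - 2*j) * θ)) := by
    exact intervalIntegral.integral_congr fun θ _ => hrw θ
  rw [hcong, intervalIntegral.integral_const_mul,
    intervalIntegral.integral_finset_sum (fun j _ => by
      apply Continuous.intervalIntegrable; fun_prop)]
  have hterm : ∀ j ∈ Finset.range (2*p+1),
      (∫ θ in (0:ℝ)..π, ((2*p).choose j : ℝ) * (Real.exp (-θ/α) * Real.cos (((2*p:ℝ) - 2*j) * θ)))
        = ((2*p).choose j : ℝ) * (α * (1 - Real.exp (-π/α)) / (1 + ((2*p:ℝ) - 2*j)^2 * α^2)) := by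
    intro j hj
    rw [intervalIntegral.integral_const_mul]
    congr 1
    apply hI
    · have : ((2*p:ℝ) - 2*j) * π = (((p:ℤ) - j : ℤ) : ℝ) * (2 * π) := by push_cast; ring
      rw [this, Real.cos_int_mul_two_pi]
    · have : ((2*p:ℝ) - 2*j) * π = (((2*(p:ℤ) - 2*j) : ℤ) : ℝ) * π := by push_cast; ring
      rw [this, Real.sin_int_mul_pi]
  rw [Finset.sum_congr rfl hterm, Finset.mul_sum, Finset.mul_sum]
  exact Finset.sum_congr rfl fun j _ => by ring


private lemma sum_sym (α : ℝ) (p : ℕ) :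
    ∑ j ∈ Finset.range (2*p+1), ((2*p).choose j : ℝ) / (1 + ((2*p:ℝ) - 2*j)^2 * α^2)
      = ((2*p).choose p : ℝ)
        + 2 * ∑ k ∈ Finset.Icc 1 p, ((2*p).choose (p-k) : ℝ) / (1 + 4*(k:ℝ)^2*α^2) := by
  set f : ℕ → ℝ := fun j => ((2*p).choose j : ℝ) / (1 + ((2*p:ℝ) - 2*j)^2 * α^2) with hf
  set g : ℕ → ℝ := fun k => ((2*p).choose (p-k) : ℝ) / (1 + 4*(k:ℝ)^2*α^2) with hg
  have hsplit : ∑ j ∈ Finset.range (2*p+1), f j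
      = (∑ j ∈ Finset.range p, f j) + f p + ∑ j ∈ Finset.Ico (p+1) (2*p+1), f j := by
    rw [Finset.range_eq_Ico,
      ← Finset.sum_Ico_consecutive f (by omega : 0 ≤ p+1) (by omega : p+1 ≤ 2*p+1),
      ← Finset.range_eq_Ico, Finset.sum_range_succ]
  have hA : ∑ j ∈ Finset.range p, f j = ∑ k ∈ Finset.Icc 1 p, g k := by
    refine Finset.sum_nbij' (fun j => p - j) (fun k => p - k) ?_ ?_ ?_ ?_ ?_
    · intro j hj; simp only [Finset.mem_range] at hj; simp [Finset.mem_Icc]; omega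
    · intro k hk; simp only [Finset.mem_Icc] at hk; simp [Finset.mem_range]; omega
    · intro j hj; simp only [Finset.mem_range] at hj; omega
    · intro k hk; simp only [Finset.mem_Icc] at hk; omega
    · intro j hj
      simp only [Finset.mem_range] at hj
      have h1 : p - (p - j) = j := by omega
      have h2 : ((2*p:ℝ) - 2*j) = 2 * ((p - j : ℕ) : ℝ) := by
        have : ((p - j : ℕ) : ℝ) = (p:ℝ) - j := by
          rw [Nat.cast_sub (by omega : j ≤ p)]
        rw [this]; ring
      simp only [hf, hg, h1, h2]
      congr 1
      ring
  have hB : ∑ j ∈ Finset.Ico (p+1) (2*p+1), f j = ∑ k ∈ Finset.Icc 1 p, g k := by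
    refine Finset.sum_nbij' (fun j => j - p) (fun k => k + p) ?_ ?_ ?_ ?_ ?_
    · intro j hj; simp only [Finset.mem_Ico] at hj; simp [Finset.mem_Icc]; omega
    · intro k hk; simp only [Finset.mem_Icc] at hk; simp [Finset.mem_Ico]; omega
    · intro j hj; simp only [Finset.mem_Ico] at hj; omega
    · intro k hk; simp only [Finset.mem_Icc] at hk; omega
    · intro j hj
      simp only [Finset.mem_Ico] at hj
      have hch : (2*p).choose j = (2*p).choose (p - (j - p)) := by
        have h2 : p - (j - p) = 2*p - j := by omega
        rw [h2, Nat.choose_symm (by omega : j ≤ 2*p)]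
      have h2 : ((2*p:ℝ) - 2*j)^2 = (2 * ((j - p : ℕ) : ℝ))^2 := by
        have : ((j - p : ℕ) : ℝ) = (j:ℝ) - p := by
          rw [Nat.cast_sub (by omega : p ≤ j)]
        rw [this]; ring
      simp only [hf, hg, hch, h2]
      congr 1
      ring
  have hfp : f p = ((2*p).choose p : ℝ) := by
    simp only [hf]
    have : ((2*p:ℝ) - 2*p) = 0 := by ring
    rw [this]
    norm_num
  rw [hsplit, hA, hB, hfp]
  ring


private lemma parts (α : ℝ) (hα : 0 < α) (m : ℕ) (hm : Odd m) :
    ∫ θ in (0:ℝ)..π, Real.exp (-θ/α) * Real.cos θ ^ m * Real.sin θ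
      = (1 - Real.exp (-π/α))/((m:ℝ)+1)
        - (1/(α*((m:ℝ)+1))) * ∫ θ in (0:ℝ)..π, Real.exp (-θ/α) * Real.cos θ ^ (m+1) := by
  have hα' : α ≠ 0 := ne_of_gt hα
  have hm1 : ((m:ℝ)+1) ≠ 0 := by positivity
  have hF : ∀ θ : ℝ, HasDerivAt (fun t : ℝ => -(1/((m:ℝ)+1)) * (Real.exp (-t/α) * Real.cos t ^ (m+1)))
      (Real.exp (-θ/α) * Real.cos θ ^ (m+1) * (1/(α*((m:ℝ)+1)))
        + Real.exp (-θ/α) * Real.cos θ ^ m * Real.sin θ) θ := by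
    intro θ
    have h1 : HasDerivAt (fun t : ℝ => Real.exp (-t/α)) (Real.exp (-θ/α) * (-(1/α))) θ := by
      have h : HasDerivAt (fun t : ℝ => -t/α) (-(1/α)) θ := by
        simpa [neg_div] using (hasDerivAt_neg θ).div_const α
      exact h.exp
    have h2 : HasDerivAt (fun t : ℝ => Real.cos t ^ (m+1))
        (((m:ℝ)+1) * Real.cos θ ^ m * (-Real.sin θ)) θ := by
      have := (Real.hasDerivAt_cos θ).fun_pow (m+1)
      simpa using this
    have := (h1.fun_mul h2).const_mul (-(1/((m:ℝ)+1)))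
    refine this.congr_deriv ?_
    field_simp
    ring
  have hint : IntervalIntegrable (fun θ : ℝ =>
      Real.exp (-θ/α) * Real.cos θ ^ (m+1) * (1/(α*((m:ℝ)+1)))
        + Real.exp (-θ/α) * Real.cos θ ^ m * Real.sin θ) MeasureTheory.volume 0 π := by
    apply Continuous.intervalIntegrable; fun_prop
  have h := intervalIntegral.integral_eq_sub_of_hasDerivAt (fun x _ => hF x) hint
  rw [intervalIntegral.integral_add
      (by apply Continuous.intervalIntegrable; fun_prop)
      (by apply Continuous.intervalIntegrable; fun_prop),
    intervalIntegral.integral_mul_const] at h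
  have hcosπ : Real.cos π ^ (m+1) = 1 := by
    rw [Real.cos_pi]
    exact (hm.add_one).neg_one_pow
  simp only [hcosπ, Real.cos_zero, one_pow, mul_one, Real.exp_zero, neg_zero, zero_div] at h
  linear_combination h



/-- for `α > 0` and odd `m ≥ 1`,
`∫₀^π e^(-θ/α) (cos θ)^m sin θ dθ
  = ((1 - e^(-π/α))/((m+1) 2^m)) [2^m - (1/2) binom(m+1,(m+1)/2)
      - Σ_{k=1}^{(m+1)/2} binom(m+1,(m-2k+1)/2)/(4k²α²+1)]`. -/
theorem exp_integral_odd
    (α : ℝ) (hα : 0 < α) (m : ℕ) (hm : Odd m) :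
    ∫ θ in (0 : ℝ)..π, Real.exp (-θ / α) * (Real.cos θ) ^ m * Real.sin θ
      = (1 - Real.exp (-π / α)) / (((m : ℝ) + 1) * 2 ^ m) *
          ((2 : ℝ) ^ m - (1 / 2) * ((m + 1).choose ((m + 1) / 2) : ℝ) -
            ∑ k ∈ Finset.Icc 1 ((m + 1) / 2),
              ((m + 1).choose ((m + 1 - 2 * k) / 2) : ℝ) /
                (4 * (k : ℝ) ^ 2 * α ^ 2 + 1)) := by
  obtain ⟨t, ht⟩ := hm
  set q : ℕ := t + 1 with hqdef
  have hq : m + 1 = 2 * q := by omega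
  have hα' : α ≠ 0 := ne_of_gt hα
  have hm1 : ((m:ℝ)+1) ≠ 0 := by positivity
  have hintegrand : (∫ θ in (0 : ℝ)..π, Real.exp (-θ / α) * (Real.cos θ) ^ m * Real.sin θ)
      = (1 - Real.exp (-π/α))/((m:ℝ)+1)
        - (1/(α*((m:ℝ)+1))) * ∫ θ in (0:ℝ)..π, Real.exp (-θ/α) * Real.cos θ ^ (m+1) :=
    parts α hα m ⟨t, ht⟩
  have hJ : (∫ θ in (0:ℝ)..π, Real.exp (-θ/α) * Real.cos θ ^ (m+1))
      = α * (1 - Real.exp (-π/α)) / 2^(2*q) *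
          (((2*q).choose q : ℝ)
            + 2 * ∑ k ∈ Finset.Icc 1 q, ((2*q).choose (q-k) : ℝ) / (1 + 4*(k:ℝ)^2*α^2)) := by
    rw [show m + 1 = 2*q from hq,
      integral_exp_cos_pow α hα q (fun b hb hs => integral_exp_cos α hα b hb hs)
        (fun n θ => two_cos_pow n θ), sum_sym α q]
  rw [hintegrand, hJ]
  have hC : ((m + 1).choose ((m + 1) / 2) : ℝ) = ((2*q).choose q : ℝ) := by
    have h2 : 2*q/2 = q := by omega
    rw [hq, h2]
  have hT : ∑ k ∈ Finset.Icc 1 ((m + 1) / 2),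
        ((m + 1).choose ((m + 1 - 2 * k) / 2) : ℝ) / (4 * (k : ℝ) ^ 2 * α ^ 2 + 1)
      = ∑ k ∈ Finset.Icc 1 q, ((2*q).choose (q-k) : ℝ) / (1 + 4*(k:ℝ)^2*α^2) := by
    rw [show (m + 1) / 2 = q by omega]
    refine Finset.sum_congr rfl fun k hk => ?_
    have hk' : k ≤ q := (Finset.mem_Icc.mp hk).2
    have h1 : (m + 1 - 2 * k) / 2 = q - k := by omega
    rw [h1, hq]
    ring_nf
  rw [hC, hT]
  have hpow : (2:ℝ)^(2*q) = 2 * 2^m := by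
    rw [← hq, pow_succ]; ring
  have h2m : (2:ℝ)^m ≠ 0 := by positivity
  have hmq : (m:ℝ) + 1 = 2*(q:ℝ) := by exact_mod_cast congrArg (Nat.cast : ℕ → ℝ) hq
  rw [hpow]
  field_simp
  ring
end

section
/- Let α > 0 and ψ_α(θ) := exp(−θ/α) for θ ∈ [0,π]. Then the 2-Schoenberg coefficients b_{n,2}(α) := (n+1/2)∫₀^π P_n(cos θ) ψ_α(θ) sin θ dθ are given, for every n ≥ 0, by b_{n,2}(α) = (2n+1) 2^{n−1} { Σ_{m even, 0≤m≤n} binom(n,m) binom((n+m−1)/2, n) ((1+e^{−π/α})/((m+1)2^m)) [ 2^m − Σ_{k=0}^{m/2} binom(m+1,(m−2k)/2)/((2k+1)²α²+1) ] + Σ_{m odd, 0≤m≤n} binom(n,m) binom((n+m−1)/2, n) ((1−e^{−π/α})/((m+1)2^m)) [ 2^m − (1/2)binom(m+1,(m+1)/2) − Σ_{k=1}^{(m+1)/2} binom(m+1,(m−2k+1)/2)/(4k²α²+1) ] }. -/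
open Real

/-- The Legendre polynomials, via the standard three-term recurrence
`(n+2) P_{n+2}(x) = (2n+3) x P_{n+1}(x) - (n+1) P_n(x)`, `P_0 = 1`, `P_1 = x`. -/
noncomputable def legendreP : ℕ → ℝ → ℝ
  | 0, _ => 1
  | 1, x => x
  | n + 2, x =>
      ((2 * (n : ℝ) + 3) * x * legendreP (n + 1) x - ((n : ℝ) + 1) * legendreP n x)
        / ((n : ℝ) + 2)

/-- Generalized binomial coefficient `binom(a, n) = a(a-1)⋯(a-n+1)/n!` for real `a`. -/
noncomputable def genBinom (a : ℝ) (n : ℕ) : ℝ :=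
  (∏ i ∈ Finset.range n, (a - i)) / (n.factorial : ℝ)

lemma cos_int_pi (k : ℤ) : Real.cos (k * π) = (-1)^k := by
  simpa using Real.cos_int_mul_pi_sub 0 k

lemma integral_cos_exp (α : ℝ) (hα : 0 < α) (k : ℤ) :
    ∫ θ in (0:ℝ)..π, Real.cos ((k:ℝ)*θ) * Real.exp (-θ/α)
      = α / (1 + α^2*(k:ℝ)^2) * (1 - (-1)^k * Real.exp (-π/α)) := by
  have hα' : α ≠ 0 := ne_of_gt hα
  set D : ℝ := 1 + α^2*(k:ℝ)^2 with hD
  have hDpos : 0 < D := by positivity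
  have hD' : D ≠ 0 := ne_of_gt hDpos
  set a : ℝ := α^2*(k:ℝ)/D
  set b : ℝ := -α/D
  have key : ∀ θ : ℝ, HasDerivAt (fun θ => Real.exp (-θ/α) * (a * Real.sin ((k:ℝ)*θ) + b * Real.cos ((k:ℝ)*θ)))
      (Real.cos ((k:ℝ)*θ) * Real.exp (-θ/α)) θ := by
    intro θ
    have h1 : HasDerivAt (fun θ : ℝ => Real.exp (-θ/α)) (Real.exp (-θ/α) * (-1/α)) θ := by
      have h0 : HasDerivAt (fun θ : ℝ => -θ/α) (-1/α) θ := by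
        simpa using ((hasDerivAt_id θ).neg.div_const α)
      simpa [mul_comm] using h0.exp
    have h2 : HasDerivAt (fun θ : ℝ => a * Real.sin ((k:ℝ)*θ) + b * Real.cos ((k:ℝ)*θ))
        (a * ((k:ℝ) * Real.cos ((k:ℝ)*θ)) + b * (-(k:ℝ) * Real.sin ((k:ℝ)*θ))) θ := by
      have hs : HasDerivAt (fun θ : ℝ => Real.sin ((k:ℝ)*θ)) (Real.cos ((k:ℝ)*θ) * (k:ℝ)) θ := by
        simpa [Function.comp_def] using (Real.hasDerivAt_sin ((k:ℝ)*θ)).comp θ ((hasDerivAt_id θ).const_mul (k:ℝ))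
      have hc : HasDerivAt (fun θ : ℝ => Real.cos ((k:ℝ)*θ)) (-Real.sin ((k:ℝ)*θ) * (k:ℝ)) θ := by
        simpa [Function.comp_def] using (Real.hasDerivAt_cos ((k:ℝ)*θ)).comp θ ((hasDerivAt_id θ).const_mul (k:ℝ))
      have := (hs.const_mul a).add (hc.const_mul b)
      refine this.congr_deriv ?_
      ring
    have := h1.mul h2
    refine this.congr_deriv ?_
    have hD2 : (1:ℝ) + (k:ℝ)^2 * α^2 ≠ 0 := by positivity
    simp only [a, b, hD]
    field_simp
    ring
  have hcont : IntervalIntegrable (fun θ => Real.cos ((k:ℝ)*θ) * Real.exp (-θ/α)) MeasureTheory.volume 0 π := by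
    apply Continuous.intervalIntegrable
    continuity
  have := intervalIntegral.integral_eq_sub_of_hasDerivAt (fun θ _ => key θ) hcont
  rw [this]
  have hsin : Real.sin ((k:ℝ)*π) = 0 := Real.sin_int_mul_pi k
  have hcos : Real.cos ((k:ℝ)*π) = (-1)^k := cos_int_pi k
  have hD2 : (1:ℝ) + (k:ℝ)^2 * α^2 ≠ 0 := by positivity
  simp only [hsin, hcos, a, b, hD, mul_zero, zero_mul, add_zero, zero_add, Real.exp_zero, mul_one, Real.sin_zero, Real.cos_zero]
  field_simp
  rw [zero_div, neg_zero, Real.exp_zero]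
  ring

lemma cos_pow_expand (p : ℕ) (θ : ℝ) :
    (2:ℝ)^p * Real.cos θ ^ p
      = ∑ j ∈ Finset.range (p+1), (p.choose j : ℝ) * Real.cos (((2*(j:ℤ) - p : ℤ) : ℝ) * θ) := by
  have key : (2:ℂ)^p * Complex.cos θ ^ p
      = ∑ j ∈ Finset.range (p+1), (p.choose j : ℂ) * Complex.exp ((((2*(j:ℤ) - p : ℤ) : ℝ) * θ : ℝ) * Complex.I) := by
    have hcos : Complex.cos θ = (Complex.exp ((θ:ℂ) * Complex.I) + Complex.exp (-(θ:ℂ) * Complex.I)) / 2 := by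
      rw [Complex.cos]
    rw [hcos, div_pow, add_pow, mul_comm, div_mul_cancel₀ _ (pow_ne_zero _ two_ne_zero)]
    apply Finset.sum_congr rfl
    intro j hj
    have hjp : j ≤ p := Nat.lt_succ_iff.mp (Finset.mem_range.mp hj)
    rw [← Complex.exp_nat_mul, ← Complex.exp_nat_mul, ← Complex.exp_add, mul_comm]
    congr 1
    push_cast
    rw [Nat.cast_sub hjp]
    push_cast
    ring
  have key2 : (((2:ℝ)^p * Real.cos θ ^ p : ℝ) : ℂ)
      = ∑ j ∈ Finset.range (p+1), (p.choose j : ℂ) * Complex.exp ((((2*(j:ℤ) - p : ℤ) : ℝ) * θ : ℝ) * Complex.I) := by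
    rw [← key]
    push_cast [Complex.ofReal_cos]
    rfl
  have := congrArg Complex.re key2
  simp only [Complex.ofReal_re, Complex.re_sum, Complex.mul_re, Complex.natCast_re,
    Complex.natCast_im, Complex.exp_ofReal_mul_I_re, zero_mul, sub_zero] at this
  exact this

lemma integral_cos_pow_exp (α : ℝ) (hα : 0 < α) (p : ℕ) :
    ∫ θ in (0:ℝ)..π, Real.cos θ ^ p * Real.exp (-θ/α)
      = α * (1 - (-1)^p * Real.exp (-π/α)) / 2^p *
          ∑ j ∈ Finset.range (p+1), (p.choose j : ℝ) / (1 + α^2 * ((p:ℝ) - 2*j)^2) := by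
  have h2 : ((2:ℝ)^p) ≠ 0 := by positivity
  have hfun : ∀ θ : ℝ, Real.cos θ ^ p * Real.exp (-θ/α)
      = ∑ j ∈ Finset.range (p+1),
          (p.choose j : ℝ) / 2^p * (Real.cos (((2*(j:ℤ) - p : ℤ) : ℝ)*θ) * Real.exp (-θ/α)) := by
    intro θ
    have h := cos_pow_expand p θ
    have : Real.cos θ ^ p = (∑ j ∈ Finset.range (p+1), (p.choose j : ℝ) * Real.cos (((2*(j:ℤ) - p : ℤ) : ℝ) * θ)) / 2^p := by
      rw [eq_div_iff h2, mul_comm]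
      exact h
    rw [this, div_mul_eq_mul_div, Finset.sum_mul, Finset.sum_div]
    apply Finset.sum_congr rfl
    intro j _
    ring
  rw [intervalIntegral.integral_congr (g := fun θ => ∑ j ∈ Finset.range (p+1),
        (p.choose j : ℝ) / 2^p * (Real.cos (((2*(j:ℤ) - p : ℤ) : ℝ)*θ) * Real.exp (-θ/α)))
      (fun θ _ => hfun θ)]
  rw [intervalIntegral.integral_finset_sum]
  · rw [Finset.mul_sum]
    apply Finset.sum_congr rfl
    intro j _
    rw [intervalIntegral.integral_const_mul, integral_cos_exp α hα]
    have hsign : ((-1:ℝ)^(2*(j:ℤ) - p)) = (-1)^p := by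
      rw [zpow_sub₀ (by norm_num : (-1:ℝ) ≠ 0), zpow_natCast]
      rw [show (2*(j:ℤ)) = (2:ℤ)*j from rfl, zpow_mul]
      norm_num
      rw [← inv_pow]
      norm_num
    have hsq : ((2*(j:ℤ) - p : ℤ) : ℝ)^2 = ((p:ℝ) - 2*j)^2 := by push_cast; ring
    rw [hsign, hsq]
    ring
  · intro j _
    apply Continuous.intervalIntegrable
    fun_prop

lemma Im_closed (α : ℝ) (hα : 0 < α) (m : ℕ) :
    ∫ θ in (0:ℝ)..π, Real.cos θ ^ m * Real.exp (-θ/α) * Real.sin θ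
      = (1 + (-1)^m * Real.exp (-π/α)) / (((m:ℝ)+1) * 2^(m+1)) *
          ((2:ℝ)^(m+1) - ∑ j ∈ Finset.range (m+2),
            ((m+1).choose j : ℝ) / (1 + α^2 * (((m:ℝ)+1) - 2*j)^2)) := by
  have hα' : α ≠ 0 := ne_of_gt hα
  have hm1 : ((m:ℝ)+1) ≠ 0 := by positivity
  set G : ℝ → ℝ := fun θ => -(Real.cos θ^(m+1))/((m:ℝ)+1) * Real.exp (-θ/α) with hG
  have hder : ∀ θ : ℝ, HasDerivAt G
      (Real.cos θ^m * Real.exp (-θ/α) * Real.sin θ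
        + Real.cos θ^(m+1) * Real.exp (-θ/α) / (((m:ℝ)+1)*α)) θ := by
    intro θ
    have hc : HasDerivAt (fun θ : ℝ => Real.cos θ ^ (m+1))
        ((m+1 : ℕ) * Real.cos θ^m * (-Real.sin θ)) θ := by
      simpa [Pi.pow_def] using (Real.hasDerivAt_cos θ).pow (m+1)
    have hcn : HasDerivAt (fun θ : ℝ => -(Real.cos θ^(m+1))/((m:ℝ)+1))
        (-((m+1 : ℕ) * Real.cos θ^m * (-Real.sin θ))/((m:ℝ)+1)) θ := hc.neg.div_const _
    have he : HasDerivAt (fun θ : ℝ => Real.exp (-θ/α)) (Real.exp (-θ/α) * (-1/α)) θ := by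
      have h0 : HasDerivAt (fun θ : ℝ => -θ/α) (-1/α) θ := by
        simpa using ((hasDerivAt_id θ).neg.div_const α)
      simpa [mul_comm] using h0.exp
    have := hcn.mul he
    refine this.congr_deriv ?_
    push_cast
    field_simp
  have hint1 : IntervalIntegrable (fun θ => Real.cos θ^m * Real.exp (-θ/α) * Real.sin θ)
      MeasureTheory.volume 0 π := by apply Continuous.intervalIntegrable; fun_prop
  have hint2 : IntervalIntegrable (fun θ => Real.cos θ^(m+1) * Real.exp (-θ/α) / (((m:ℝ)+1)*α))
      MeasureTheory.volume 0 π := by apply Continuous.intervalIntegrable; fun_prop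
  have key := intervalIntegral.integral_eq_sub_of_hasDerivAt (fun θ _ => hder θ) (hint1.add hint2)
  rw [intervalIntegral.integral_add hint1 hint2] at key
  have hdiv : ∫ θ in (0:ℝ)..π, Real.cos θ^(m+1) * Real.exp (-θ/α) / (((m:ℝ)+1)*α)
      = (∫ θ in (0:ℝ)..π, Real.cos θ^(m+1) * Real.exp (-θ/α)) / (((m:ℝ)+1)*α) := by
    rw [intervalIntegral.integral_div]
  rw [hdiv, integral_cos_pow_exp α hα (m+1)] at key
  have hGpi : G π = -((-1)^(m+1)) * Real.exp (-π/α) / ((m:ℝ)+1) := by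
    simp [hG, Real.cos_pi]
    ring
  have hG0 : G 0 = -1/((m:ℝ)+1) := by
    simp [hG]
  rw [hGpi, hG0] at key
  have h2 : ((2:ℝ)^(m+1)) ≠ 0 := by positivity
  have hsign : ((-1:ℝ)^(m+1)) = -(-1)^m := by ring
  rw [hsign] at key
  have := key
  field_simp at this
  rw [div_mul_eq_mul_div, eq_div_iff (by positivity : ((m:ℝ)+1)*2^(m+1) ≠ 0)]
  apply mul_right_cancel₀ (show α*((m:ℝ)+1) ≠ 0 by positivity)
  simp only [neg_div] at this ⊢
  push_cast at this ⊢
  linear_combination α * ((m:ℝ)+1) * this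

lemma pair_even (α : ℝ) (t : ℕ) :
    ∑ j ∈ Finset.range (2*t+2), ((2*t+1).choose j : ℝ) / (1 + α^2*(((2*t:ℝ)+1) - 2*j)^2)
      = 2 * ∑ k ∈ Finset.range (t + 1),
          ((2*t+1).choose ((2*t - 2*k)/2) : ℝ) / ((2*(k:ℝ)+1)^2 * α^2 + 1) := by
  set f : ℕ → ℝ := fun j => ((2*t+1).choose j : ℝ) / (1 + α^2*(((2*t:ℝ)+1) - 2*j)^2) with hf
  set g : ℕ → ℝ := fun k => ((2*t+1).choose (t-k) : ℝ) / ((2*(k:ℝ)+1)^2 * α^2 + 1) with hg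
  have hsplit : ∑ j ∈ Finset.range (2*t+2), f j
      = (∑ j ∈ Finset.range (t+1), f j) + ∑ i ∈ Finset.range (t+1), f ((t+1) + i) := by
    rw [show 2*t+2 = (t+1)+(t+1) by ring, Finset.sum_range_add]
  have h1 : ∑ j ∈ Finset.range (t+1), f j = ∑ k ∈ Finset.range (t+1), g k := by
    rw [← Finset.sum_range_reflect g (t+1)]
    apply Finset.sum_congr rfl
    intro j hj
    have hjt : j ≤ t := Nat.lt_succ_iff.mp (Finset.mem_range.mp hj)
    simp only [hf, hg]
    have e1 : t + 1 - 1 - j = t - j := by omega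
    have e2 : t - (t - j) = j := by omega
    rw [e1, e2]
    congr 1
    have : ((t - j : ℕ) : ℝ) = (t:ℝ) - j := by
      rw [Nat.cast_sub hjt]
    rw [this]
    ring
  have h2 : ∑ i ∈ Finset.range (t+1), f ((t+1) + i) = ∑ k ∈ Finset.range (t+1), g k := by
    apply Finset.sum_congr rfl
    intro i hi
    have hit : i ≤ t := Nat.lt_succ_iff.mp (Finset.mem_range.mp hi)
    simp only [hf, hg]
    have e1 : (2*t+1).choose (t+1+i) = (2*t+1).choose (t-i) := by
      rw [← Nat.choose_symm (by omega : t+1+i ≤ 2*t+1)]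
      congr 1
      omega
    rw [e1]
    congr 1
    push_cast
    ring
  have hgoal : ∀ k ∈ Finset.range (t+1), ((2*t+1).choose ((2*t - 2*k)/2) : ℝ) / ((2*(k:ℝ)+1)^2 * α^2 + 1) = g k := by
    intro k hk
    simp only [hg]
    rw [show (2*t - 2*k)/2 = t - k by omega]
  rw [hsplit, h1, h2, Finset.sum_congr rfl hgoal]
  ring

lemma pair_odd (α : ℝ) (t : ℕ) :
    ∑ j ∈ Finset.range (2*t+3), ((2*t+2).choose j : ℝ) / (1 + α^2*(((2*t:ℝ)+2) - 2*j)^2)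
      = ((2*t+2).choose (t+1) : ℝ) + 2 * ∑ k ∈ Finset.range (t + 1),
          ((2*t+2).choose (t-k) : ℝ) / (4*((k:ℝ)+1)^2 * α^2 + 1) := by
  set f : ℕ → ℝ := fun j => ((2*t+2).choose j : ℝ) / (1 + α^2*(((2*t:ℝ)+2) - 2*j)^2) with hf
  set g : ℕ → ℝ := fun k => ((2*t+2).choose (t-k) : ℝ) / (4*((k:ℝ)+1)^2 * α^2 + 1) with hg
  have hsplit : ∑ j ∈ Finset.range (2*t+3), f j
      = (∑ j ∈ Finset.range (t+1), f j) + ∑ i ∈ Finset.range (t+2), f ((t+1) + i) := by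
    rw [show 2*t+3 = (t+1)+(t+2) by ring, Finset.sum_range_add]
  have hmid : ∑ i ∈ Finset.range (t+2), f ((t+1) + i)
      = f (t+1) + ∑ i ∈ Finset.range (t+1), f ((t+2) + i) := by
    rw [Finset.sum_range_succ' (fun i => f ((t+1)+i)) (t+1)]
    rw [add_comm]
    congr 1
    · apply Finset.sum_congr rfl
      intro i _
      congr 1
      omega
  have hf1 : f (t+1) = ((2*t+2).choose (t+1) : ℝ) := by
    simp only [hf]
    push_cast
    rw [show ((2*t:ℝ)+2) - 2*((t:ℝ)+1) = 0 by ring]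
    norm_num
  have h1 : ∑ j ∈ Finset.range (t+1), f j = ∑ k ∈ Finset.range (t+1), g k := by
    rw [← Finset.sum_range_reflect g (t+1)]
    apply Finset.sum_congr rfl
    intro j hj
    have hjt : j ≤ t := Nat.lt_succ_iff.mp (Finset.mem_range.mp hj)
    simp only [hf, hg]
    have e1 : t + 1 - 1 - j = t - j := by omega
    have e2 : t - (t - j) = j := by omega
    rw [e1, e2]
    congr 1
    rw [Nat.cast_sub hjt]
    ring
  have h2 : ∑ i ∈ Finset.range (t+1), f ((t+2) + i) = ∑ k ∈ Finset.range (t+1), g k := by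
    apply Finset.sum_congr rfl
    intro i hi
    have hit : i ≤ t := Nat.lt_succ_iff.mp (Finset.mem_range.mp hi)
    simp only [hf, hg]
    have e1 : (2*t+2).choose (t+2+i) = (2*t+2).choose (t-i) := by
      rw [← Nat.choose_symm (by omega : t+2+i ≤ 2*t+2)]
      congr 1
      omega
    rw [e1]
    congr 1
    push_cast
    ring
  rw [hsplit, hmid, hf1, h1, h2]
  ring

lemma Im_even (α : ℝ) (hα : 0 < α) (m : ℕ) (hm : Even m) :
    ∫ θ in (0:ℝ)..π, Real.cos θ ^ m * Real.exp (-θ/α) * Real.sin θ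
      = ((1 + Real.exp (-π/α)) / (((m:ℝ)+1) * 2^m)) *
          ((2:ℝ)^m - ∑ k ∈ Finset.range (m/2 + 1),
            ((m+1).choose ((m - 2*k)/2) : ℝ) / ((2*(k:ℝ)+1)^2 * α^2 + 1)) := by
  obtain ⟨t, rfl⟩ : ∃ t, m = 2*t := by
    obtain ⟨t, ht⟩ := hm; exact ⟨t, by omega⟩
  rw [Im_closed α hα]
  have hsgn : ((-1:ℝ))^(2*t) = 1 := by
    rw [pow_mul]; norm_num
  have hS : ∑ j ∈ Finset.range (2*t+2), ((2*t+1).choose j : ℝ) / (1 + α^2 * (((2*t:ℕ):ℝ)+1 - 2*j)^2)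
      = 2 * ∑ k ∈ Finset.range (t + 1),
          ((2*t+1).choose ((2*t - 2*k)/2) : ℝ) / ((2*(k:ℝ)+1)^2 * α^2 + 1) := by
    have := pair_even α t
    convert this using 3
    push_cast
    ring
  rw [show (2*t+2 : ℕ) = 2*t+1+1 from rfl] at hS ⊢
  rw [hsgn]
  rw [hS]
  have h1 : (((2*t:ℕ):ℝ)+1) ≠ 0 := by positivity
  have h2 : ((2:ℝ)^(2*t)) ≠ 0 := by positivity
  rw [show (2*t:ℕ)/2 = t by omega]
  field_simp
  ring

lemma Im_odd (α : ℝ) (hα : 0 < α) (m : ℕ) (hm : Odd m) :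
    ∫ θ in (0:ℝ)..π, Real.cos θ ^ m * Real.exp (-θ/α) * Real.sin θ
      = ((1 - Real.exp (-π/α)) / (((m:ℝ)+1) * 2^m)) *
          ((2:ℝ)^m - (1/2) * (((m+1).choose ((m+1)/2)) : ℝ) - ∑ k ∈ Finset.Icc 1 ((m+1)/2),
            ((m+1).choose ((m+1 - 2*k)/2) : ℝ) / (4*(k:ℝ)^2 * α^2 + 1)) := by
  obtain ⟨t, rfl⟩ : ∃ t, m = 2*t+1 := hm
  rw [Im_closed α hα]
  have hsgn : ((-1:ℝ))^(2*t+1) = -1 := by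
    rw [pow_succ, pow_mul]; norm_num
  have hS : ∑ j ∈ Finset.range (2*t+1+2), ((2*t+1+1).choose j : ℝ) / (1 + α^2 * ((((2*t+1:ℕ)):ℝ)+1 - 2*j)^2)
      = ((2*t+2).choose (t+1) : ℝ) + 2 * ∑ k ∈ Finset.range (t + 1),
          ((2*t+2).choose (t-k) : ℝ) / (4*((k:ℝ)+1)^2 * α^2 + 1) := by
    have := pair_odd α t
    rw [show (2*t+1+2 : ℕ) = 2*t+3 from rfl, show (2*t+1+1 : ℕ) = 2*t+2 from rfl]
    convert this using 3
    push_cast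
    ring
  rw [hsgn, hS]
  have hIcc : ∑ k ∈ Finset.Icc 1 ((2*t+1+1)/2),
        ((2*t+1+1).choose ((2*t+1+1 - 2*k)/2) : ℝ) / (4*(k:ℝ)^2 * α^2 + 1)
      = ∑ k ∈ Finset.range (t + 1), ((2*t+2).choose (t-k) : ℝ) / (4*((k:ℝ)+1)^2 * α^2 + 1) := by
    rw [show (2*t+1+1)/2 = t+1 by omega]
    rw [show Finset.Icc 1 (t+1) = Finset.Ico 1 (t+2) from rfl]
    rw [Finset.sum_Ico_eq_sum_range]
    rw [show t+2-1 = t+1 by omega]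
    apply Finset.sum_congr rfl
    intro i hi
    have hit : i ≤ t := Nat.lt_succ_iff.mp (Finset.mem_range.mp hi)
    rw [show (2*t+1+1 - 2*(1+i))/2 = t - i by omega, show (2*t+1+1:ℕ) = 2*t+2 from rfl]
    congr 1
    push_cast
    ring
  rw [hIcc, show (2*t+1+1)/2 = t+1 by omega]
  have h1 : (((2*t+1:ℕ):ℝ)+1) ≠ 0 := by positivity
  have h2 : ((2:ℝ)^(2*t+1)) ≠ 0 := by positivity
  push_cast
  field_simp
  ring

noncomputable def Pg (N : ℕ) (y : ℝ) : ℝ := ∏ i ∈ Finset.range N, (y - 2*i)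

noncomputable def cL (n m : ℕ) : ℝ :=
  if m ≤ n then Pg n ((n:ℝ) + m - 1) / (m.factorial * (n-m).factorial) else 0

lemma Pg_succ (N : ℕ) (y : ℝ) : Pg (N+1) y = Pg N y * (y - 2*N) := Finset.prod_range_succ _ _

lemma Pg_succ' (N : ℕ) (y : ℝ) : Pg (N+1) y = y * Pg N (y - 2) := by
  rw [Pg, Finset.prod_range_succ']
  rw [show y - 2*((0:ℕ):ℝ) = y by norm_num, mul_comm]
  congr 1
  apply Finset.prod_congr rfl
  intro i _
  push_cast [Pg]
  ring

lemma cL_zero_of_gt {n m : ℕ} (h : n < m) : cL n m = 0 := by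
  simp [cL, Nat.not_le.mpr h]

lemma cL_const (n : ℕ) : ((n:ℝ)+2) * cL (n+2) 0 = -((n:ℝ)+1) * cL n 0 := by
  simp only [cL, Nat.zero_le, if_pos, Nat.sub_zero, Nat.factorial_zero]
  have e2 : ((n+2:ℕ):ℝ) + (0:ℕ) - 1 = (n:ℝ) + 1 := by push_cast; ring
  have e0 : ((n:ℕ):ℝ) + (0:ℕ) - 1 = (n:ℝ) - 1 := by push_cast; ring
  rw [e2, e0]
  have hp : Pg (n+2) ((n:ℝ)+1) = ((n:ℝ)+1) * (-((n:ℝ)+1)) * Pg n ((n:ℝ)-1) := by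
    rw [Pg_succ', Pg_succ]
    have : (n:ℝ) + 1 - 2 = (n:ℝ) - 1 := by ring
    rw [this]
    ring
  rw [hp]
  have hfac : ((n+2).factorial : ℝ) = ((n:ℝ)+2) * ((n:ℝ)+1) * (n.factorial : ℝ) := by
    rw [show n+2 = (n+1)+1 from rfl, Nat.factorial_succ, Nat.factorial_succ]
    push_cast
    ring
  rw [hfac]
  have h1 : ((n.factorial : ℝ)) ≠ 0 := Nat.cast_ne_zero.mpr (Nat.factorial_ne_zero n)
  have h2 : ((n:ℝ)+1) ≠ 0 := by positivity
  have h3 : ((n:ℝ)+2) ≠ 0 := by positivity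
  field_simp

lemma cL_step (n m : ℕ) (hm : m ≤ n+1) :
    ((n:ℝ)+2) * cL (n+2) (m+1) = (2*(n:ℝ)+3) * cL (n+1) m - ((n:ℝ)+1) * cL n (m+1) := by
  rcases Nat.lt_or_ge m n with hlt | hge
  · obtain ⟨t, rfl⟩ : ∃ t, n = m+1+t := ⟨n - (m+1), by omega⟩
    simp only [cL, if_pos (by omega : m+1 ≤ m+1+t+2), if_pos (by omega : m ≤ m+1+t+1),
      if_pos (by omega : m+1 ≤ m+1+t)]
    rw [show (m+1+t+2) - (m+1) = t+2 by omega, show (m+1+t+1) - m = t+2 by omega,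
      show (m+1+t) - (m+1) = t by omega]
    rw [show ((m+1+t+2:ℕ):ℝ) + ((m+1:ℕ):ℝ) - 1 = ((m:ℝ)+(m:ℝ)+t+1) + 2 by push_cast; ring]
    rw [show ((m+1+t+1:ℕ):ℝ) + ((m:ℕ):ℝ) - 1 = ((m:ℝ)+(m:ℝ)+t+1) by push_cast; ring]
    rw [show ((m+1+t:ℕ):ℝ) + ((m+1:ℕ):ℝ) - 1 = ((m:ℝ)+(m:ℝ)+t+1) by push_cast; ring]
    set y : ℝ := (m:ℝ)+(m:ℝ)+t+1 with hy
    rw [show (m+1+t+2) = (m+1+t+1)+1 from rfl, Pg_succ' (m+1+t+1) (y+2)]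
    rw [show y + 2 - 2 = y by ring]
    rw [show (m+1+t+1) = (m+1+t)+1 from rfl, Pg_succ (m+1+t) y]
    set A : ℝ := Pg (m+1+t) y with hA
    have hfac1 : ((t+2).factorial : ℝ) = ((t:ℝ)+2) * ((t:ℝ)+1) * (t.factorial : ℝ) := by
      rw [show t+2 = (t+1)+1 from rfl, Nat.factorial_succ, Nat.factorial_succ]; push_cast; ring
    have hfac2 : ((m+1).factorial : ℝ) = ((m:ℝ)+1) * (m.factorial : ℝ) := by
      rw [Nat.factorial_succ]; push_cast; ring
    rw [hfac1, hfac2]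
    have h1 : ((t.factorial : ℝ)) ≠ 0 := Nat.cast_ne_zero.mpr (Nat.factorial_ne_zero t)
    have h2 : ((m.factorial : ℝ)) ≠ 0 := Nat.cast_ne_zero.mpr (Nat.factorial_ne_zero m)
    have h3 : ((t:ℝ)+2) ≠ 0 := by positivity
    have h4 : ((t:ℝ)+1) ≠ 0 := by positivity
    have h5 : ((m:ℝ)+1) ≠ 0 := by positivity
    push_cast
    field_simp
    ring
  · rcases Nat.eq_or_lt_of_le hge with hEq | hgt
    · subst hEq
      have z1 : cL (n+2) (n+1) = 0 := by
        simp only [cL, if_pos (by omega : n+1 ≤ n+2)]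
        rw [show (n+2) = (n+1)+1 from rfl, Pg_succ]
        have : ((n+2:ℕ):ℝ) + ((n+1:ℕ):ℝ) - 1 - 2*((n+1:ℕ):ℝ) = 0 := by push_cast; ring
        rw [this]
        simp
      have z2 : cL (n+1) n = 0 := by
        simp only [cL, if_pos (by omega : n ≤ n+1)]
        rw [Pg_succ]
        have : ((n+1:ℕ):ℝ) + ((n:ℕ):ℝ) - 1 - 2*((n:ℕ):ℝ) = 0 := by push_cast; ring
        rw [this]
        simp
      have z3 : cL n (n+1) = 0 := by simp [cL]
      rw [z1, z2, z3]
      ring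
    · have hEq : m = n+1 := by omega
      subst hEq
      have z3 : cL n (n+1+1) = 0 := by simp [cL, show ¬ (n+1+1 ≤ n) by omega]
      have e1 : cL (n+2) (n+2) = Pg (n+2) (2*(n:ℝ)+3) / ((n+2).factorial : ℝ) := by
        simp only [cL, if_pos (le_refl (n+2))]
        rw [show (n+2)-(n+2) = 0 by omega]
        simp only [Nat.factorial_zero]
        rw [show ((n+2:ℕ):ℝ) + ((n+2:ℕ):ℝ) - 1 = 2*(n:ℝ)+3 by push_cast; ring]
        norm_num
      have e2 : cL (n+1) (n+1) = Pg (n+1) (2*(n:ℝ)+1) / ((n+1).factorial : ℝ) := by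
        simp only [cL, if_pos (le_refl (n+1))]
        rw [show (n+1)-(n+1) = 0 by omega]
        simp only [Nat.factorial_zero]
        rw [show ((n+1:ℕ):ℝ) + ((n+1:ℕ):ℝ) - 1 = 2*(n:ℝ)+1 by push_cast; ring]
        norm_num
      rw [z3, e1, e2]
      rw [show (n+2) = (n+1)+1 from rfl, Pg_succ' (n+1) (2*(n:ℝ)+3)]
      rw [show 2*(n:ℝ)+3-2 = 2*(n:ℝ)+1 by ring]
      have hfac : (((n+1)+1).factorial : ℝ) = ((n:ℝ)+2) * ((n+1).factorial : ℝ) := by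
        rw [Nat.factorial_succ]; push_cast; ring
      rw [hfac]
      have h1 : (((n+1).factorial : ℝ)) ≠ 0 := Nat.cast_ne_zero.mpr (Nat.factorial_ne_zero _)
      have h2 : ((n:ℝ)+2) ≠ 0 := by positivity
      field_simp
      ring

lemma legendre_expand : ∀ (n : ℕ) (x : ℝ),
    legendreP n x = ∑ m ∈ Finset.range (n+1), cL n m * x^m := by
  intro n
  induction n using Nat.strong_induction_on with
  | _ n ih =>
    rcases n with _ | _ | k
    · intro x
      norm_num [legendreP, cL, Pg, Finset.sum_range_one]
    · intro x
      norm_num [legendreP, cL, Pg, Finset.sum_range_succ, Finset.sum_range_one,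
        Finset.prod_range_one]
    · intro x
      have h1 := ih (k+1) (by omega) x
      have h0 := ih k (by omega) x
      rw [legendreP, h1, h0, div_eq_iff (by positivity : ((k:ℝ)+2) ≠ 0)]
      have hxs : (2*(k:ℝ)+3) * x * (∑ m ∈ Finset.range (k+2), cL (k+1) m * x^m)
          = (2*(k:ℝ)+3) * ∑ m ∈ Finset.range (k+2), cL (k+1) m * x^(m+1) := by
        rw [Finset.mul_sum, Finset.mul_sum]
        apply Finset.sum_congr rfl
        intro m _
        ring
      have h0ext : ∑ m ∈ Finset.range (k+1), cL k m * x^m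
          = ∑ m ∈ Finset.range (k+3), cL k m * x^m := by
        apply Finset.sum_subset (Finset.range_subset_range.mpr (by omega))
        intro m _ hm
        rw [cL_zero_of_gt (by simp only [Finset.mem_range] at hm; omega)]
        ring
      have h0split : ∑ m ∈ Finset.range (k+3), cL k m * x^m
          = (∑ m ∈ Finset.range (k+2), cL k (m+1) * x^(m+1)) + cL k 0 := by
        rw [Finset.sum_range_succ' (fun m => cL k m * x^m) (k+2)]
        simp
      have hRsplit : ∑ m ∈ Finset.range (k+3), cL (k+2) m * x^m
          = (∑ m ∈ Finset.range (k+2), cL (k+2) (m+1) * x^(m+1)) + cL (k+2) 0 := by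
        rw [Finset.sum_range_succ' (fun m => cL (k+2) m * x^m) (k+2)]
        simp
      rw [hxs, h0ext, h0split, hRsplit]
      have hsum : (∑ m ∈ Finset.range (k+2), cL (k+2) (m+1) * x^(m+1)) * ((k:ℝ)+2)
          = (2*(k:ℝ)+3) * (∑ m ∈ Finset.range (k+2), cL (k+1) m * x^(m+1))
            - ((k:ℝ)+1) * (∑ m ∈ Finset.range (k+2), cL k (m+1) * x^(m+1)) := by
        rw [Finset.sum_mul, Finset.mul_sum, Finset.mul_sum, ← Finset.sum_sub_distrib]
        apply Finset.sum_congr rfl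
        intro m hm
        have hstep := cL_step k m (by simp only [Finset.mem_range] at hm; omega)
        linear_combination (x^(m+1)) * hstep
      linear_combination -hsum - cL_const k

lemma coeff_eq (n m : ℕ) (h : m ≤ n) :
    (2:ℝ)^n * ((n.choose m : ℝ) * genBinom (((n:ℝ) + (m:ℝ) - 1)/2) n) = cL n m := by
  simp only [cL, if_pos h, genBinom]
  have hprod : (2:ℝ)^n * ∏ i ∈ Finset.range n, ((((n:ℝ) + (m:ℝ) - 1)/2) - i)
      = Pg n ((n:ℝ) + (m:ℝ) - 1) := by
    rw [Pg, show ((2:ℝ)^n) = ∏ _i ∈ Finset.range n, (2:ℝ) by rw [Finset.prod_const, Finset.card_range]]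
    rw [← Finset.prod_mul_distrib]
    apply Finset.prod_congr rfl
    intro i _
    ring
  have hfac : ((n.choose m : ℕ) : ℝ) * (m.factorial : ℝ) * ((n-m).factorial : ℝ) = (n.factorial : ℝ) := by
    exact_mod_cast congrArg (Nat.cast (R := ℝ)) (Nat.choose_mul_factorial_mul_factorial h)
  have h1 : ((n.factorial : ℝ)) ≠ 0 := Nat.cast_ne_zero.mpr (Nat.factorial_ne_zero n)
  have h2 : ((m.factorial : ℝ)) ≠ 0 := Nat.cast_ne_zero.mpr (Nat.factorial_ne_zero m)
  have h3 : (((n-m).factorial : ℝ)) ≠ 0 := Nat.cast_ne_zero.mpr (Nat.factorial_ne_zero _)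
  have step : (2:ℝ)^n * (((n.choose m : ℕ):ℝ) * ((∏ i ∈ Finset.range n, ((((n:ℝ) + (m:ℝ) - 1)/2) - i)) / (n.factorial : ℝ)))
      = ((n.choose m : ℕ):ℝ) * ((2:ℝ)^n * ∏ i ∈ Finset.range n, ((((n:ℝ) + (m:ℝ) - 1)/2) - i)) / (n.factorial : ℝ) := by
    ring
  rw [step, hprod, div_eq_div_iff h1 (by positivity : ((m.factorial : ℝ) * ((n-m).factorial : ℝ)) ≠ 0)]
  linear_combination Pg n ((n:ℝ) + (m:ℝ) - 1) * hfac

/-- closed form for the 2-Schoenberg coefficients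
`b_{n,2}(α) = (n + 1/2) ∫₀^π P_n(cos θ) e^(-θ/α) sin θ dθ` of the exponential
family `ψ_α(θ) = exp(-θ/α)`. -/
theorem exponential_schoenberg_coefficients
    (α : ℝ) (hα : 0 < α) (n : ℕ) :
    ((n : ℝ) + 1 / 2) *
        ∫ θ in (0 : ℝ)..π, legendreP n (Real.cos θ) * Real.exp (-θ / α) * Real.sin θ
      = (2 * (n : ℝ) + 1) * (2 : ℝ) ^ ((n : ℤ) - 1) *
        ((∑ m ∈ (Finset.range (n + 1)).filter (fun m => Even m),
            (n.choose m : ℝ) * genBinom (((n : ℝ) + (m : ℝ) - 1) / 2) n *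
              ((1 + Real.exp (-π / α)) / (((m : ℝ) + 1) * 2 ^ m)) *
              ((2 : ℝ) ^ m -
                ∑ k ∈ Finset.range (m / 2 + 1),
                  ((m + 1).choose ((m - 2 * k) / 2) : ℝ) /
                    ((2 * (k : ℝ) + 1) ^ 2 * α ^ 2 + 1)))
        + ∑ m ∈ (Finset.range (n + 1)).filter (fun m => Odd m),
            (n.choose m : ℝ) * genBinom (((n : ℝ) + (m : ℝ) - 1) / 2) n *
              ((1 - Real.exp (-π / α)) / (((m : ℝ) + 1) * 2 ^ m)) *
              ((2 : ℝ) ^ m - (1 / 2) * ((m + 1).choose ((m + 1) / 2) : ℝ) -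
                ∑ k ∈ Finset.Icc 1 ((m + 1) / 2),
                  ((m + 1).choose ((m + 1 - 2 * k) / 2) : ℝ) /
                    (4 * (k : ℝ) ^ 2 * α ^ 2 + 1))) := by
  have hL : (∫ θ in (0:ℝ)..π, legendreP n (Real.cos θ) * Real.exp (-θ / α) * Real.sin θ)
      = ∑ m ∈ Finset.range (n+1), cL n m *
          ∫ θ in (0:ℝ)..π, Real.cos θ ^ m * Real.exp (-θ/α) * Real.sin θ := by
    rw [intervalIntegral.integral_congr (g := fun θ => ∑ m ∈ Finset.range (n+1),
          cL n m * (Real.cos θ ^ m * Real.exp (-θ/α) * Real.sin θ))]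
    · rw [intervalIntegral.integral_finset_sum]
      · exact Finset.sum_congr rfl fun m _ => intervalIntegral.integral_const_mul _ _
      · intro m _
        apply Continuous.intervalIntegrable
        fun_prop
    · intro θ _
      simp only
      rw [legendre_expand n (Real.cos θ), Finset.sum_mul, Finset.sum_mul]
      exact Finset.sum_congr rfl fun m _ => by ring
  rw [hL, Finset.mul_sum]
  rw [Finset.sum_filter, Finset.sum_filter, ← Finset.sum_add_distrib, Finset.mul_sum]
  apply Finset.sum_congr rfl
  intro m hm
  have hmn : m ≤ n := Nat.lt_succ_iff.mp (Finset.mem_range.mp hm)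
  have h2pow : (2:ℝ) ^ ((n:ℤ) - 1) = 2^n / 2 := by
    rw [zpow_sub₀ (two_ne_zero), zpow_natCast, zpow_one]
  have hc := coeff_eq n m hmn
  rcases Nat.even_or_odd m with he | ho
  · rw [Im_even α hα m he, if_pos he, if_neg (by simpa using (Nat.not_odd_iff_even.mpr he))]
    rw [h2pow, ← hc]
    ring
  · rw [Im_odd α hα m ho, if_neg (by simpa using (Nat.not_even_iff_odd.mpr ho)), if_pos ho]
    rw [h2pow, ← hc]
    ring
end

section
/- Let α ∈ (0, π] and let m ≥ 0 be an even integer. Then ∫₀^α (1 − θ/α)² (cos θ)^m sin θ dθ = 1/(m+1) + (2^{1−m}/((m+1) α²)) Σ_{k=0}^{m/2} binom(m+1, k) (cos((m−2k+1)α) − 1)/(m−2k+1)². -/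
open Real

lemma two_pow_mul_cos_pow (m : ℕ) (hm : Even m) (x : ℝ) :
    (2:ℝ)^m * Real.cos x ^ (m+1)
      = ∑ k ∈ Finset.range (m/2+1), (((m+1).choose k : ℕ) : ℝ)
          * Real.cos (((m:ℝ) - 2*(k:ℝ) + 1) * x) := by
  obtain ⟨t, rfl⟩ := hm
  have hhalf : (t+t)/2 = t := by omega
  rw [hhalf]
  have key : (2:ℂ)^(t+t+1) * Complex.cos x ^ (t+t+1)
      = 2 * ∑ k ∈ Finset.range (t+1), (((t+t+1).choose k : ℕ) : ℂ)
          * Complex.cos ((((t:ℂ)+t) - 2*(k:ℂ) + 1) * x) := by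
    rw [← mul_pow, Complex.two_cos, add_pow]
    simp only [neg_mul]
    have hterm : ∀ j ∈ Finset.range (t+t+1+1),
        Complex.exp (x*Complex.I)^j * Complex.exp (-(x*Complex.I))^(t+t+1-j)
            * ((t+t+1).choose j : ℂ)
        = ((t+t+1).choose j : ℂ)
            * Complex.exp ((2*(j:ℂ) - (2*t+1)) * (x*Complex.I)) := by
      intro j hj
      have hj' : j ≤ t+t+1 := by simpa [Nat.lt_succ_iff] using hj
      rw [← Complex.exp_nat_mul, ← Complex.exp_nat_mul, ← Complex.exp_add, mul_comm]
      congr 2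
      push_cast [hj']
      ring
    rw [Finset.sum_congr rfl hterm]
    have hsplit : ∑ j ∈ Finset.range (t+t+1+1), (((t+t+1).choose j : ℕ) : ℂ)
            * Complex.exp ((2*(j:ℂ) - (2*t+1)) * (x*Complex.I))
        = (∑ j ∈ Finset.range (t+1), (((t+t+1).choose j : ℕ) : ℂ)
            * Complex.exp ((2*(j:ℂ) - (2*t+1)) * (x*Complex.I)))
          + ∑ j ∈ Finset.range (t+1), (((t+t+1).choose (t+t+1-j) : ℕ) : ℂ)
            * Complex.exp ((2*(((t+t+1-j : ℕ)):ℂ) - (2*t+1)) * (x*Complex.I)) := by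
      have e1 : t+t+1+1 = (t+1)+(t+1) := by omega
      rw [e1, Finset.sum_range_add, ← Finset.sum_range_reflect
        (fun i => (((t+t+1).choose (t+1+i) : ℕ) : ℂ)
            * Complex.exp ((2*((t+1+i : ℕ):ℂ) - (2*t+1)) * (x*Complex.I))) (t+1)]
      congr 1
      apply Finset.sum_congr rfl
      intro j hj
      have hj' : j < t+1 := Finset.mem_range.mp hj
      have e2 : t+1+(t+1-1-j) = t+t+1-j := by omega
      rw [e2]
    rw [hsplit, ← Finset.sum_add_distrib, Finset.mul_sum]
    apply Finset.sum_congr rfl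
    intro j hj
    have hj' : j ≤ t := by simpa [Nat.lt_succ_iff] using hj
    have hcs : (t+t+1).choose (t+t+1-j) = (t+t+1).choose j :=
      Nat.choose_symm (by omega)
    have hA : (2*(j:ℂ) - (2*t+1)) * (x*Complex.I)
        = (-((((t:ℂ)+t-2*j+1)*x)) * Complex.I) := by ring
    have hB : (2*(((t+t+1-j : ℕ)):ℂ) - (2*t+1)) * (x*Complex.I)
        = ((((t:ℂ)+t-2*j+1)*x) * Complex.I) := by
      push_cast [show j ≤ t+t+1 by omega]; ring
    rw [hcs, hA, hB, mul_left_comm, Complex.two_cos]; ring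
  have keyR : (2:ℝ)^(t+t+1) * Real.cos x ^ (t+t+1)
      = 2 * ∑ k ∈ Finset.range (t+1), (((t+t+1).choose k : ℕ) : ℝ)
          * Real.cos (((t:ℝ)+t - 2*(k:ℝ) + 1) * x) := by
    apply Complex.ofReal_injective
    push_cast [Complex.ofReal_cos]
    convert key using 3
  have h2 : (2:ℝ)^(t+t+1) = 2 * 2^(t+t) := by ring
  rw [h2, mul_assoc] at keyR
  have := mul_left_cancel₀ (two_ne_zero) keyR
  rw [this]
  apply Finset.sum_congr rfl
  intro k hk
  congr 2
  push_cast
  ring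

/-- for `α ∈ (0, π]` and even `m ≥ 0`,
`∫₀^α (1 - θ/α)² (cos θ)^m sin θ dθ
  = 1/(m+1) + (2^(1-m)/((m+1)α²)) Σ_{k=0}^{m/2} binom(m+1,k)
      (cos((m-2k+1)α) - 1)/(m-2k+1)²`. -/
theorem askey_integral_even
    (α : ℝ) (hα : α ∈ Set.Ioc 0 π) (m : ℕ) (hm : Even m) :
    ∫ θ in (0 : ℝ)..α, (1 - θ / α) ^ 2 * (Real.cos θ) ^ m * Real.sin θ
      = 1 / ((m : ℝ) + 1) +
        (2 : ℝ) ^ (1 - (m : ℤ)) / (((m : ℝ) + 1) * α ^ 2) *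
          ∑ k ∈ Finset.range (m / 2 + 1),
            ((m + 1).choose k : ℝ) *
              (Real.cos (((m : ℝ) - 2 * (k : ℝ) + 1) * α) - 1) /
                ((m : ℝ) - 2 * (k : ℝ) + 1) ^ 2 := by
  obtain ⟨hα0, -⟩ := hα
  have hαne : α ≠ 0 := ne_of_gt hα0
  have hm1 : ((m:ℝ)+1) ≠ 0 := by positivity
  have h2m : ((2:ℝ)^m) ≠ 0 := by positivity
  set c : ℕ → ℝ := fun k => (m:ℝ) - 2*(k:ℝ) + 1 with hc
  have hck : ∀ k ∈ Finset.range (m/2+1), c k ≠ 0 := by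
    intro k hk
    have hk' : k ≤ m/2 := Nat.lt_succ_iff.mp (Finset.mem_range.mp hk)
    have h2k : 2*k ≤ m := by obtain ⟨t, rfl⟩ := hm; omega
    have h2k' : (2*(k:ℝ)) ≤ (m:ℝ) := by exact_mod_cast h2k
    simp only [hc]
    intro hcon
    nlinarith
  have hderiv : ∀ θ ∈ Set.uIcc (0:ℝ) α,
      HasDerivAt (fun θ : ℝ => -((1-θ/α)^2 * Real.cos θ^(m+1)) / ((m:ℝ)+1)
        - 2 / (α*((m:ℝ)+1)) * ((2:ℝ)^m)⁻¹ * ∑ k ∈ Finset.range (m/2+1),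
            (((m+1).choose k : ℕ) : ℝ) * ((1-θ/α) * Real.sin (c k * θ)/(c k)
              - Real.cos (c k * θ)/((c k)^2*α)))
        ((1 - θ / α) ^ 2 * (Real.cos θ) ^ m * Real.sin θ) θ := by
    intro θ _
    have h1 : HasDerivAt (fun θ : ℝ => 1 - θ/α) (-(1/α)) θ := by
      simpa using ((hasDerivAt_id θ).div_const α).const_sub 1
    have hA := (((h1.pow 2).mul ((Real.hasDerivAt_cos θ).pow (m+1))).neg).div_const ((m:ℝ)+1)
    have hG : ∀ k ∈ Finset.range (m/2+1),
        HasDerivAt (fun θ : ℝ => (1-θ/α) * Real.sin (c k * θ)/(c k)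
            - Real.cos (c k * θ)/((c k)^2*α)) ((1-θ/α) * Real.cos (c k * θ)) θ := by
      intro k hk
      have hsin : HasDerivAt (fun θ : ℝ => Real.sin (c k * θ)) (Real.cos (c k*θ) * c k) θ := by
        simpa [Function.comp_def] using (Real.hasDerivAt_sin (c k*θ)).comp θ ((hasDerivAt_id θ).const_mul (c k))
      have hcos : HasDerivAt (fun θ : ℝ => Real.cos (c k * θ)) (-Real.sin (c k*θ) * c k) θ := by
        simpa [Function.comp_def] using (Real.hasDerivAt_cos (c k*θ)).comp θ ((hasDerivAt_id θ).const_mul (c k))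
      have hd := ((h1.mul hsin).div_const (c k)).sub (hcos.div_const ((c k)^2*α))
      refine hd.congr_deriv ?_
      field_simp [hck k hk]
      ring
    have hsum := HasDerivAt.fun_sum (fun k hk => ((hG k hk).const_mul ((((m+1).choose k : ℕ) : ℝ))))
    have hHd := hA.sub (hsum.const_mul (2 / (α*((m:ℝ)+1)) * ((2:ℝ)^m)⁻¹))
    refine hHd.congr_deriv ?_
    have hpull : ∑ k ∈ Finset.range (m/2+1),
        (((m+1).choose k : ℕ) : ℝ) * ((1-θ/α) * Real.cos (c k * θ))
        = (1-θ/α) * ((2:ℝ)^m * Real.cos θ^(m+1)) := by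
      rw [two_pow_mul_cos_pow m hm θ, Finset.mul_sum]
      exact Finset.sum_congr rfl (fun k hk => by ring)
    rw [hpull]
    simp only [Pi.pow_apply, Pi.mul_apply, Nat.add_sub_cancel, Nat.cast_add, Nat.cast_one, Nat.cast_ofNat]
    field_simp
    linear_combination (2 * Real.cos θ * Real.cos θ ^ m * (α - θ)) * mul_inv_cancel₀ hαne
  rw [intervalIntegral.integral_eq_sub_of_hasDerivAt hderiv
    (Continuous.intervalIntegrable (by fun_prop) 0 α)]
  have e1 : 1 - α/α = (0:ℝ) := by rw [div_self hαne]; ring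
  simp only [e1, zero_div, sub_zero, mul_zero, zero_mul, Real.sin_zero, Real.cos_zero,
    one_pow, one_mul, mul_one, zero_sub, neg_zero, zero_pow, sub_self]
  have hzp : (2:ℝ)^(1-(m:ℤ)) = 2 * ((2:ℝ)^m)⁻¹ := by
    rw [zpow_sub₀ (two_ne_zero), zpow_one, zpow_natCast, div_eq_mul_inv]
  rw [hzp]
  have hre : ∀ a b x y : ℝ, a - x - (b - y) = (a - b) + (y - x) := by intros; ring
  rw [hre]
  congr 1
  · ring
  · rw [← mul_sub, ← Finset.sum_sub_distrib, Finset.mul_sum, Finset.mul_sum]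
    apply Finset.sum_congr rfl
    intro k hk
    have hcc := hck k hk
    simp only [hc] at hcc ⊢
    field_simp
    ring
end
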